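/- arXiv:1903.07155 — 2 statements merged into one kernel-verified Lean document; each statement's English description precedes it below -/
import Mathlib

section
/- Let a = (a_j) be a decreasing, summable, doubling sequence with Σ_j a_j = 1, C_a the associated Cantor set, Φ a dimension function and φ the associated depth function. Then the upper Φ-dimension of C_a equals inf{β : there exist k₀ and c₀ > 0 such that for all k ≥ k₀ and all n ≥ φ(k), (s_k/s_{k+n})^β ≥ c₀ 2^n}, and the lower Φ-dimension of C_a equals sup{β : there exist k₀ and c₀ > 0 such that for all k ≥ k₀ and all n ≥ φ(k), (s_k/s_{k+n})^β ≤ c₀ 2^n}. -/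
set_option linter.unusedSectionVars false
set_option maxHeartbeats 1000000


open Set Metric Filter Topology
open scoped ENNReal

noncomputable section

/-- The least number of closed balls of radius `r` needed to cover `E`
(`∞` if there is no finite cover). -/
def coverNumber {X : Type*} [PseudoMetricSpace X] (r : ℝ) (E : Set X) : ℝ≥0∞ :=
  ⨅ (s : Finset X) (_ : E ⊆ ⋃ x ∈ s, closedBall x r), (s.card : ℝ≥0∞)

/-- `Φ : (0,1) → [0,∞)` is a dimension function if `x ^ (1 + Φ x)` decreases to `0`
as `x` decreases to `0`. -/
def IsDimensionFunction (Φ : ℝ → ℝ) : Prop :=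
  (∀ x ∈ Ioo (0:ℝ) 1, 0 ≤ Φ x) ∧
  (∀ x ∈ Ioo (0:ℝ) 1, ∀ y ∈ Ioo (0:ℝ) 1, x ≤ y → x ^ (1 + Φ x) ≤ y ^ (1 + Φ y)) ∧
  Tendsto (fun x : ℝ => x ^ (1 + Φ x)) (nhdsWithin 0 (Ioo 0 1)) (nhds 0)

/-- A metric space is doubling if there is `M ≥ 1` such that every closed ball of radius `R`
can be covered by at most `M` closed balls of radius `R / 2`. -/
def IsDoublingSpace (X : Type*) [PseudoMetricSpace X] : Prop :=
  ∃ M : ℕ, 1 ≤ M ∧ ∀ (x : X) (R : ℝ), ∃ s : Finset X, s.card ≤ M ∧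
    closedBall x R ⊆ ⋃ y ∈ s, closedBall y (R / 2)

/-- The upper `Φ`-dimension. -/
def upperPhiDim {X : Type*} [PseudoMetricSpace X] (Φ : ℝ → ℝ) (E : Set X) : ℝ :=
  sInf {α : ℝ | ∃ c₁ > (0:ℝ), ∃ c₂ > (0:ℝ), ∀ r R : ℝ,
    0 < r → r ≤ R ^ (1 + Φ R) → R ^ (1 + Φ R) ≤ R → R < c₁ → ∀ z ∈ E,
      coverNumber r (closedBall z R ∩ E) ≤ ENNReal.ofReal (c₂ * (R / r) ^ α)}

/-- The lower `Φ`-dimension. -/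
def lowerPhiDim {X : Type*} [PseudoMetricSpace X] (Φ : ℝ → ℝ) (E : Set X) : ℝ :=
  sSup {α : ℝ | ∃ c₁ > (0:ℝ), ∃ c₂ > (0:ℝ), ∀ r R : ℝ,
    0 < r → r ≤ R ^ (1 + Φ R) → R ^ (1 + Φ R) ≤ R → R < c₁ → ∀ z ∈ E,
      ENNReal.ofReal (c₂ * (R / r) ^ α) ≤ coverNumber r (closedBall z R ∩ E)}

/-- The (upper) Assouad dimension: the upper `Φ`-dimension with `Φ ≡ 0`. -/
def assouadDim {X : Type*} [PseudoMetricSpace X] (E : Set X) : ℝ :=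
  upperPhiDim (fun _ => 0) E

/-- The lower Assouad dimension: the lower `Φ`-dimension with `Φ ≡ 0`. -/
def lowerAssouadDim {X : Type*} [PseudoMetricSpace X] (E : Set X) : ℝ :=
  lowerPhiDim (fun _ => 0) E

/-- The upper `θ`-Assouad spectrum: the upper `Φ`-dimension with constant `Φ = 1/θ - 1`. -/
def upperAssouadSpectrum {X : Type*} [PseudoMetricSpace X] (θ : ℝ) (E : Set X) : ℝ :=
  upperPhiDim (fun _ => 1 / θ - 1) E

/-- The lower `θ`-Assouad spectrum: the lower `Φ`-dimension with constant `Φ = 1/θ - 1`. -/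
def lowerAssouadSpectrum {X : Type*} [PseudoMetricSpace X] (θ : ℝ) (E : Set X) : ℝ :=
  lowerPhiDim (fun _ => 1 / θ - 1) E

/-- The upper quasi-Assouad dimension, `lim_{θ → 1}` of the upper `θ`-Assouad spectrum;
since the upper spectrum is nondecreasing in `θ`, this limit is the supremum over
`θ ∈ (0,1)`. -/
def quasiAssouadDim {X : Type*} [PseudoMetricSpace X] (E : Set X) : ℝ :=
  ⨆ θ : Ioo (0:ℝ) 1, upperAssouadSpectrum (θ : ℝ) E

/-- The lower quasi-Assouad dimension, `lim_{θ → 1}` of the lower `θ`-Assouad spectrum;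
since the lower spectrum is nonincreasing in `θ`, this limit is the infimum over
`θ ∈ (0,1)`. -/
def quasiLowerAssouadDim {X : Type*} [PseudoMetricSpace X] (E : Set X) : ℝ :=
  ⨅ θ : Ioo (0:ℝ) 1, lowerAssouadSpectrum (θ : ℝ) E

/-- Upper box dimension `limsup_{r → 0} log N_r(E) / |log r|`. -/
def upperBoxDim {X : Type*} [PseudoMetricSpace X] (E : Set X) : ℝ :=
  limsup (fun r : ℝ => Real.log (coverNumber r E).toReal / |Real.log r|)
    (nhdsWithin 0 (Ioo 0 1))

/-- Lower box dimension `liminf_{r → 0} log N_r(E) / |log r|`. -/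
def lowerBoxDim {X : Type*} [PseudoMetricSpace X] (E : Set X) : ℝ :=
  liminf (fun r : ℝ => Real.log (coverNumber r E).toReal / |Real.log r|)
    (nhdsWithin 0 (Ioo 0 1))




/-- The total length of the gaps eventually removed from the `j`-th (`0`-indexed, left to
right) step-`k` interval in the construction of the Cantor set associated with the gap
sequence `a` (where `a i` is the length of the `i`-th gap, `i ≥ 1`); this is the length of
that interval. -/
def cantorLen (a : ℕ → ℝ) (k j : ℕ) : ℝ :=
  ∑' m : ℕ, ∑ i ∈ Finset.range (2 ^ m), a (2 ^ (k + m) + j * 2 ^ m + i)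

/-- `C` is the Cantor set associated with the gap sequence `a` (gaps `a 1, a 2, …`,
the gap removed at step `k+1` from the `j`-th (`0`-indexed) step-`k` interval having length
`a (2^k + j)`): there are left endpoints `L k j` of the step-`k` intervals, each interval
has length `cantorLen a k j`, the construction starts at `[0,1]` with `L 0 0 = 0`, and
removing the appropriate gap from a step-`k` interval yields its two step-`(k+1)`
subintervals. -/
def IsCantorSetOf (a : ℕ → ℝ) (C : Set ℝ) : Prop :=
  ∃ L : ℕ → ℕ → ℝ, L 0 0 = 0 ∧
    (∀ k j, j < 2 ^ k → L (k + 1) (2 * j) = L k j) ∧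
    (∀ k j, j < 2 ^ k →
      L (k + 1) (2 * j + 1) = L k j + cantorLen a (k + 1) (2 * j) + a (2 ^ k + j)) ∧
    C = ⋂ k : ℕ, ⋃ j ∈ Finset.range (2 ^ k), Icc (L k j) (L k j + cantorLen a k j)

/-- `s n = 2⁻ⁿ Σ_{j ≥ 2ⁿ} a j`, the average length of the step-`n` intervals. -/
def sSeq (a : ℕ → ℝ) (n : ℕ) : ℝ :=
  ((2 : ℝ) ^ n)⁻¹ * ∑' i : ℕ, a (2 ^ n + i)

/-- The depth function `φ` associated with the dimension function `Φ` and the Cantor set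
with gap sequence `a`: `φ n` is the minimal integer `j` with
`s (n + j) ≤ (s n) ^ (1 + Φ (s n))`. -/
def IsDepthFunction (a : ℕ → ℝ) (Φ : ℝ → ℝ) (φ : ℕ → ℕ) : Prop :=
  ∀ n : ℕ, IsLeast {j : ℕ | sSeq a (n + j) ≤ sSeq a n ^ (1 + Φ (sSeq a n))} (φ n)

/-- The gap sequence of the central Cantor set with step lengths `s`: every gap of level
`n+1` (indices `2^n ≤ i < 2^(n+1)`) has length `s n - 2 * s (n+1)`. -/
def centralGaps (s : ℕ → ℝ) : ℕ → ℝ :=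
  fun i => s (Nat.log 2 i) - 2 * s (Nat.log 2 i + 1)

/-- `E` is a central Cantor set with step lengths `s`: `s 0 = 1`, the ratios of dissection
`s (n+1) / s n` lie in `(0, 1/2)`, and `E` is the Cantor set whose step-`(n+1)` gaps all
have length `s n - 2 * s (n+1)`. -/
def IsCentralCantorSet (s : ℕ → ℝ) (E : Set ℝ) : Prop :=
  s 0 = 1 ∧ (∀ n, 0 < s (n + 1) ∧ 2 * s (n + 1) < s n) ∧ IsCantorSetOf (centralGaps s) E

/-- `E` belongs to `𝒞_a`: `E = [0,1] \ ⋃ⱼ Uⱼ` for a disjoint family of open subintervals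
`Uⱼ ⊆ [0,1]` with `length Uⱼ = a j` (`j ≥ 1`). -/
def IsComplementarySet (a : ℕ → ℝ) (E : Set ℝ) : Prop :=
  ∃ c : ℕ → ℝ, (∀ j, 0 ≤ c j ∧ c j + a (j + 1) ≤ 1) ∧
    (Pairwise fun i j =>
      Disjoint (Ioo (c i) (c i + a (i + 1))) (Ioo (c j) (c j + a (j + 1)))) ∧
    E = Icc 0 1 \ ⋃ j : ℕ, Ioo (c j) (c j + a (j + 1))

/-- The decreasing rearrangement `D_a = {Σ_{i ≥ k} a i : k = 1, 2, …}`. -/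
def decreasingSet (a : ℕ → ℝ) : Set ℝ :=
  Set.range fun k : ℕ => ∑' i : ℕ, a (k + 1 + i)


namespace CantorAux

variable {a : ℕ → ℝ} {κ : ℝ}

/-- tail sum from 2^n -/
def T (a : ℕ → ℝ) (n : ℕ) : ℝ := ∑' i : ℕ, a (2 ^ n + i)

/-- level sum -/
def lvl (a : ℕ → ℝ) (n : ℕ) : ℝ := ∑ i ∈ Finset.range (2 ^ n), a (2 ^ n + i)

lemma sSeq_eq (a : ℕ → ℝ) (n : ℕ) : sSeq a n = ((2:ℝ)^n)⁻¹ * T a n := rfl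

section basic
variable (hpos : ∀ j : ℕ, 0 < a (j + 1)) (hdec : ∀ j : ℕ, a (j + 2) ≤ a (j + 1))
  (hsum : Summable fun j : ℕ => a (j + 1))

include hpos in
lemma apos : ∀ j, 1 ≤ j → 0 < a j := by
  intro j hj
  obtain ⟨i, rfl⟩ := Nat.exists_eq_add_of_le hj
  simpa [add_comm] using hpos i

include hdec in
lemma amono : ∀ p q, 1 ≤ p → p ≤ q → a q ≤ a p := by
  intro p q hp hpq
  induction q, hpq using Nat.le_induction with
  | base => exact le_refl _
  | succ n hn ih =>
      refine le_trans ?_ ih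
      obtain ⟨i, rfl⟩ := Nat.exists_eq_add_of_le (le_trans hp hn)
      simpa [add_comm, add_assoc, add_left_comm] using hdec i

include hsum in
lemma summable_shift (N : ℕ) (hN : 1 ≤ N) : Summable fun i => a (N + i) := by
  have h := (summable_nat_add_iff (f := fun j => a (j + 1)) (N - 1)).2 hsum
  refine h.congr fun i => ?_
  congr 1
  omega

end basic

section Tfacts
variable (hpos : ∀ j : ℕ, 0 < a (j + 1)) (hdec : ∀ j : ℕ, a (j + 2) ≤ a (j + 1))
  (hsum : Summable fun j : ℕ => a (j + 1)) (htot : ∑' j : ℕ, a (j + 1) = 1)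

include hpos in
lemma term_nonneg (n i : ℕ) : 0 ≤ a (2 ^ n + i) :=
  (apos hpos _ (le_add_right Nat.one_le_two_pow)).le

include hpos hsum in
lemma T_pos (n : ℕ) : 0 < T a n := by
  refine Summable.tsum_pos (summable_shift hsum _ Nat.one_le_two_pow) (term_nonneg hpos n) 0 ?_
  simpa using apos hpos (2 ^ n) Nat.one_le_two_pow

include hsum in
lemma T_succ (n : ℕ) : T a n = lvl a n + T a (n + 1) := by
  have h := Summable.sum_add_tsum_nat_add' (f := fun i => a (2 ^ n + i)) (k := 2 ^ n)
    (by
      have := summable_shift hsum (2 ^ (n+1)) Nat.one_le_two_pow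
      refine this.congr fun i => ?_
      congr 1
      rw [pow_succ, mul_two]; omega)
  have e : ∀ i : ℕ, 2 ^ n + (i + 2 ^ n) = 2 ^ (n + 1) + i := by
    intro i; rw [pow_succ, mul_two]; omega
  rw [T, ← h, lvl, T]
  congr 1
  exact tsum_congr fun i => by rw [e i]

include hpos in
lemma lvl_nonneg (n : ℕ) : 0 ≤ lvl a n :=
  Finset.sum_nonneg fun i _ => term_nonneg hpos n i

include hdec in
lemma lvl_le (n : ℕ) : lvl a n ≤ 2 ^ n * a (2 ^ n) := by
  calc lvl a n ≤ ∑ _i ∈ Finset.range (2 ^ n), a (2 ^ n) :=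
        Finset.sum_le_sum fun i _ =>
          amono hdec (2 ^ n) _ Nat.one_le_two_pow (Nat.le_add_right _ _)
    _ = 2 ^ n * a (2 ^ n) := by simp [mul_comm]

include hdec in
lemma lvl_ge (n : ℕ) : 2 ^ n * a (2 ^ (n + 1)) ≤ lvl a n := by
  calc (2:ℝ) ^ n * a (2 ^ (n + 1)) = ∑ _i ∈ Finset.range (2 ^ n), a (2 ^ (n + 1)) := by
        simp [mul_comm]
    _ ≤ lvl a n := by
        refine Finset.sum_le_sum fun i hi =>
          amono hdec (2 ^ n + i) _ (le_trans Nat.one_le_two_pow (Nat.le_add_right _ _)) ?_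
        have h2 := Finset.mem_range.1 hi
        have : (2:ℕ) ^ (n+1) = 2 ^ n + 2 ^ n := by rw [pow_succ, mul_two]
        omega

include hpos hsum in
lemma T_antitone : Antitone (T a) := by
  refine antitone_nat_of_succ_le fun n => ?_
  rw [T_succ hsum n]
  linarith [lvl_nonneg hpos n]

include hsum htot in
lemma T_zero : T a 0 = 1 := by
  rw [T, ← htot]
  exact tsum_congr fun i => by rw [pow_zero, add_comm]

lemma T_tendsto : Tendsto (T a) atTop (nhds 0) := by
  have h0 : Tendsto (fun N : ℕ => ∑' k : ℕ, a (k + N + 1)) atTop (nhds 0) :=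
    tendsto_sum_nat_add (fun j => a (j + 1))
  have h2 : Tendsto (fun n : ℕ => 2 ^ n - 1) atTop atTop := by
    refine tendsto_atTop_mono (fun n => ?_) (tendsto_id (α := ℕ))
    have : n < 2 ^ n := Nat.lt_two_pow_self
    simp only [id]
    omega
  have h3 := h0.comp h2
  refine h3.congr fun n => ?_
  simp only [Function.comp]
  exact tsum_congr fun k => by congr 1; have : 1 ≤ 2 ^ n := Nat.one_le_two_pow; omega

include hpos hsum in
lemma hasSum_lvl (k : ℕ) : HasSum (fun m => lvl a (k + m)) (T a k) := by
  have hpart : ∀ M : ℕ, ∑ m ∈ Finset.range M, lvl a (k + m) = T a k - T a (k + M) := by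
    intro M
    induction M with
    | zero => simp
    | succ M ih =>
        rw [Finset.sum_range_succ, ih]
        have h := T_succ hsum (k + M)
        have e : k + M + 1 = k + (M + 1) := by omega
        rw [← e]
        linarith
  have hten : Tendsto (fun M => ∑ m ∈ Finset.range M, lvl a (k + m)) atTop (nhds (T a k)) := by
    simp only [hpart]
    have : Tendsto (fun M => T a (k + M)) atTop (nhds 0) := by
      have := (T_tendsto (a := a)).comp (tendsto_add_atTop_nat k)
      refine this.congr fun M => ?_
      simp [Function.comp, Nat.add_comm]
    simpa using (tendsto_const_nhds (x := T a k)).sub this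
  exact (hasSum_iff_tendsto_nat_of_nonneg (fun m => lvl_nonneg hpos _) _).2 hten

end Tfacts

section doubling
variable (hpos : ∀ j : ℕ, 0 < a (j + 1)) (hdec : ∀ j : ℕ, a (j + 2) ≤ a (j + 1))
  (hsum : Summable fun j : ℕ => a (j + 1)) (htot : ∑' j : ℕ, a (j + 1) = 1)
  (hdoub : ∀ n : ℕ, 1 ≤ n → a n ≤ κ * a (2 * n))

include hpos hdec hsum hdoub

lemma kappa_one : 1 ≤ κ := by
  have h1 := hdoub 1 le_rfl
  have h2 : a 2 ≤ a 1 := hdec 0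
  have h3 : 0 < a 2 := hpos 1
  nlinarith

lemma kappa_pos : 0 < κ := lt_of_lt_of_le one_pos (kappa_one hpos hdec hsum hdoub)

lemma gap_doub (n : ℕ) : a (2 ^ n) ≤ κ * a (2 ^ (n + 1)) := by
  have := hdoub (2 ^ n) Nat.one_le_two_pow
  rwa [← pow_succ'] at this

lemma a_pow_le_lvl (n : ℕ) : (2:ℝ) ^ n * a (2 ^ n) ≤ κ * lvl a n := by
  calc (2:ℝ) ^ n * a (2 ^ n) ≤ 2 ^ n * (κ * a (2 ^ (n + 1))) := by
        have h := gap_doub hpos hdec hsum hdoub n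
        have : (0:ℝ) ≤ 2 ^ n := by positivity
        nlinarith
    _ = κ * (2 ^ n * a (2 ^ (n + 1))) := by ring
    _ ≤ κ * lvl a n :=
        mul_le_mul_of_nonneg_left (lvl_ge hdec n)
          (le_trans zero_le_one (kappa_one hpos hdec hsum hdoub))

lemma lvl_le_doub (n : ℕ) : lvl a n ≤ κ * ((2:ℝ) ^ n * a (2 ^ (n + 1))) := by
  calc lvl a n ≤ 2 ^ n * a (2 ^ n) := lvl_le hdec n
    _ ≤ 2 ^ n * (κ * a (2 ^ (n + 1))) := by
        have h := gap_doub hpos hdec hsum hdoub n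
        have : (0:ℝ) ≤ 2 ^ n := by positivity
        nlinarith
    _ = κ * ((2:ℝ) ^ n * a (2 ^ (n + 1))) := by ring

end doubling

/-- one level of the gap sums in `cantorLen` -/
def F (a : ℕ → ℝ) (k j m : ℕ) : ℝ :=
  ∑ i ∈ Finset.range (2 ^ m), a (2 ^ (k + m) + j * 2 ^ m + i)

lemma cantorLen_eq (a : ℕ → ℝ) (k j : ℕ) : cantorLen a k j = ∑' m, F a k j m := rfl

section Fbounds
variable (hpos : ∀ j : ℕ, 0 < a (j + 1)) (hdec : ∀ j : ℕ, a (j + 2) ≤ a (j + 1))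
  (hsum : Summable fun j : ℕ => a (j + 1)) (htot : ∑' j : ℕ, a (j + 1) = 1)
  (hdoub : ∀ n : ℕ, 1 ≤ n → a n ≤ κ * a (2 * n))

include hpos hdec hsum hdoub

lemma F_nonneg (k j m : ℕ) : 0 ≤ F a k j m :=
  Finset.sum_nonneg fun i _ =>
    (apos hpos _ (le_trans (Nat.one_le_two_pow (n := k + m))
      (le_trans (Nat.le_add_right _ _) (Nat.le_add_right _ _)))).le

lemma F_le {k j : ℕ} (m : ℕ) : F a k j m ≤ 2 ^ m * a (2 ^ (k + m)) := by
  calc F a k j m ≤ ∑ _i ∈ Finset.range (2 ^ m), a (2 ^ (k + m)) :=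
        Finset.sum_le_sum fun i _ =>
          amono hdec (2 ^ (k + m)) _ Nat.one_le_two_pow
            (le_trans (Nat.le_add_right _ _) (Nat.le_add_right _ _))
    _ = 2 ^ m * a (2 ^ (k + m)) := by simp [mul_comm]

lemma F_ge {k j : ℕ} (hj : j < 2 ^ k) (m : ℕ) :
    2 ^ m * a (2 ^ (k + m + 1)) ≤ F a k j m := by
  calc (2:ℝ) ^ m * a (2 ^ (k + m + 1))
      = ∑ _i ∈ Finset.range (2 ^ m), a (2 ^ (k + m + 1)) := by simp [mul_comm]
    _ ≤ F a k j m := by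
        refine Finset.sum_le_sum fun i hi => ?_
        have hi' := Finset.mem_range.1 hi
        refine amono hdec _ _ (le_trans (Nat.one_le_two_pow (n := k + m))
          (le_trans (Nat.le_add_right _ _) (Nat.le_add_right _ _))) ?_
        have h3 : (j + 1) * 2 ^ m ≤ 2 ^ k * 2 ^ m := Nat.mul_le_mul_right _ hj
        have e1 : (2:ℕ) ^ (k + m) = 2 ^ k * 2 ^ m := pow_add 2 k m
        have e2 : (2:ℕ) ^ (k + m + 1) = 2 ^ (k + m) + 2 ^ (k + m) := by
          rw [pow_succ, mul_two]
        have e3 : (j + 1) * 2 ^ m = j * 2 ^ m + 2 ^ m := by ring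
        omega

lemma F_le_lvl {k j : ℕ} (m : ℕ) :
    F a k j m ≤ κ * (((2:ℝ) ^ k)⁻¹ * lvl a (k + m)) := by
  have hpow : (0:ℝ) < 2 ^ k := by positivity
  have key : (2:ℝ) ^ k * F a k j m ≤ κ * lvl a (k + m) := by
    calc (2:ℝ) ^ k * F a k j m ≤ 2 ^ k * (2 ^ m * a (2 ^ (k + m))) := by
          have := F_le hpos hdec hsum hdoub (k := k) (j := j) m
          nlinarith
      _ = 2 ^ (k + m) * a (2 ^ (k + m)) := by rw [pow_add]; ring
      _ ≤ κ * lvl a (k + m) := a_pow_le_lvl hpos hdec hsum hdoub (k + m)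
  calc F a k j m = ((2:ℝ) ^ k)⁻¹ * ((2:ℝ) ^ k * F a k j m) := by field_simp
    _ ≤ ((2:ℝ) ^ k)⁻¹ * (κ * lvl a (k + m)) := by
        exact mul_le_mul_of_nonneg_left key (by positivity)
    _ = κ * (((2:ℝ) ^ k)⁻¹ * lvl a (k + m)) := by ring

lemma lvl_le_F {k j : ℕ} (hj : j < 2 ^ k) (m : ℕ) :
    ((2:ℝ) ^ k)⁻¹ * lvl a (k + m) ≤ κ * F a k j m := by
  have hpow : (0:ℝ) < 2 ^ k := by positivity
  have key : lvl a (k + m) ≤ κ * ((2:ℝ) ^ k * F a k j m) := by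
    calc lvl a (k + m) ≤ κ * ((2:ℝ) ^ (k + m) * a (2 ^ (k + m + 1))) :=
          lvl_le_doub hpos hdec hsum hdoub (k + m)
      _ = κ * ((2:ℝ) ^ k * (2 ^ m * a (2 ^ (k + m + 1)))) := by rw [pow_add]; ring
      _ ≤ κ * ((2:ℝ) ^ k * F a k j m) := by
          have h1 := F_ge hpos hdec hsum hdoub hj m
          have h2 : (0:ℝ) ≤ κ := le_trans zero_le_one (kappa_one hpos hdec hsum hdoub)
          have h3 : (0:ℝ) ≤ 2 ^ k := by positivity
          exact mul_le_mul_of_nonneg_left (mul_le_mul_of_nonneg_left h1 h3) h2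
  calc ((2:ℝ) ^ k)⁻¹ * lvl a (k + m) ≤ ((2:ℝ) ^ k)⁻¹ * (κ * ((2:ℝ) ^ k * F a k j m)) :=
        mul_le_mul_of_nonneg_left key (by positivity)
    _ = κ * F a k j m := by field_simp

lemma summable_F {k j : ℕ} : Summable (F a k j) := by
  refine Summable.of_nonneg_of_le (F_nonneg hpos hdec hsum hdoub k j)
    (F_le_lvl hpos hdec hsum hdoub) ?_
  exact ((hasSum_lvl hpos hsum k).summable.mul_left (κ * ((2:ℝ) ^ k)⁻¹)).congr
    fun m => by ring

lemma len_le {k j : ℕ} : cantorLen a k j ≤ κ * sSeq a k := by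
  rw [cantorLen_eq, sSeq_eq]
  have h1 : ∑' m, F a k j m ≤ ∑' m, κ * (((2:ℝ) ^ k)⁻¹ * lvl a (k + m)) := by
    refine Summable.tsum_le_tsum (F_le_lvl hpos hdec hsum hdoub) (summable_F hpos hdec hsum hdoub) ?_
    exact ((hasSum_lvl hpos hsum k).summable.mul_left (κ * ((2:ℝ) ^ k)⁻¹)).congr
      fun m => by ring
  calc ∑' m, F a k j m ≤ ∑' m, κ * (((2:ℝ) ^ k)⁻¹ * lvl a (k + m)) := h1
    _ = κ * (((2:ℝ) ^ k)⁻¹ * T a k) := by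
        rw [tsum_mul_left, tsum_mul_left, (hasSum_lvl hpos hsum k).tsum_eq]

lemma len_ge {k j : ℕ} (hj : j < 2 ^ k) : sSeq a k ≤ κ * cantorLen a k j := by
  rw [cantorLen_eq, sSeq_eq]
  calc ((2:ℝ) ^ k)⁻¹ * T a k = ∑' m, ((2:ℝ) ^ k)⁻¹ * lvl a (k + m) := by
        rw [tsum_mul_left, (hasSum_lvl hpos hsum k).tsum_eq]
    _ ≤ ∑' m, κ * F a k j m := by
        refine Summable.tsum_le_tsum (lvl_le_F hpos hdec hsum hdoub hj) ?_ ?_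
        · exact ((hasSum_lvl hpos hsum k).summable.mul_left _)
        · exact (summable_F hpos hdec hsum hdoub).mul_left _
    _ = κ * ∑' m, F a k j m := tsum_mul_left

lemma len_nonneg (k j : ℕ) : 0 ≤ cantorLen a k j := by
  rw [cantorLen_eq]
  exact tsum_nonneg (F_nonneg hpos hdec hsum hdoub k j)

lemma len_pos {k j : ℕ} (hj : j < 2 ^ k) : 0 < cantorLen a k j := by
  have h1 := len_ge hpos hdec hsum hdoub hj
  have h2 : 0 < sSeq a k := by
    rw [sSeq_eq]
    have := T_pos hpos hsum k
    positivity
  have h3 := kappa_pos hpos hdec hsum hdoub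
  by_contra hcon
  push_neg at hcon
  have : κ * cantorLen a k j ≤ 0 := mul_nonpos_of_nonneg_of_nonpos h3.le hcon
  linarith

end Fbounds

lemma F_zero (k j : ℕ) : F a k j 0 = a (2 ^ k + j) := by
  simp [F]

lemma F_succ (k j m : ℕ) :
    F a k j (m + 1) = F a (k + 1) (2 * j) m + F a (k + 1) (2 * j + 1) m := by
  rw [F, show (2:ℕ) ^ (m + 1) = 2 ^ m + 2 ^ m by rw [pow_succ, mul_two],
    Finset.sum_range_add]
  congr 1
  · refine Finset.sum_congr rfl fun i _ => ?_
    congr 1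
    have e : k + (m + 1) = (k + 1) + m := by omega
    rw [e]
    ring
  · refine Finset.sum_congr rfl fun i _ => ?_
    congr 1
    have e : k + (m + 1) = (k + 1) + m := by omega
    rw [e]
    ring

section split
variable (hpos : ∀ j : ℕ, 0 < a (j + 1)) (hdec : ∀ j : ℕ, a (j + 2) ≤ a (j + 1))
  (hsum : Summable fun j : ℕ => a (j + 1))
  (hdoub : ∀ n : ℕ, 1 ≤ n → a n ≤ κ * a (2 * n))

include hpos hdec hsum hdoub in
lemma len_split {k j : ℕ} (hj : j < 2 ^ k) :
    cantorLen a k j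
      = cantorLen a (k + 1) (2 * j) + a (2 ^ k + j) + cantorLen a (k + 1) (2 * j + 1) := by
  have hs1 : Summable (F a (k + 1) (2 * j)) := summable_F hpos hdec hsum hdoub
  have hs2 : Summable (F a (k + 1) (2 * j + 1)) := summable_F hpos hdec hsum hdoub
  have hsucc : Summable fun m => F a k j (m + 1) :=
    (hs1.add hs2).congr fun m => (F_succ k j m).symm
  rw [cantorLen_eq, tsum_eq_zero_add' hsucc, F_zero]
  have : ∑' m, F a k j (m + 1) = cantorLen a (k + 1) (2 * j) + cantorLen a (k + 1) (2 * j + 1) := by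
    rw [cantorLen_eq, cantorLen_eq, ← Summable.tsum_add hs1 hs2]
    exact tsum_congr fun m => F_succ k j m
  rw [this]
  ring

end split

section sfacts
variable (hpos : ∀ j : ℕ, 0 < a (j + 1)) (hdec : ∀ j : ℕ, a (j + 2) ≤ a (j + 1))
  (hsum : Summable fun j : ℕ => a (j + 1)) (htot : ∑' j : ℕ, a (j + 1) = 1)
  (hdoub : ∀ n : ℕ, 1 ≤ n → a n ≤ κ * a (2 * n))

include hpos hsum

lemma s_pos (n : ℕ) : 0 < sSeq a n := by
  rw [sSeq_eq]
  have := T_pos hpos hsum n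
  positivity

lemma s_half (n : ℕ) : sSeq a (n + 1) ≤ sSeq a n / 2 := by
  have hT : T a (n + 1) ≤ T a n := by
    have h1 := T_succ hsum n
    have h2 := lvl_nonneg hpos n
    linarith
  have hTnn : 0 ≤ T a n := (T_pos hpos hsum n).le
  rw [sSeq_eq, sSeq_eq, pow_succ, mul_inv]
  calc ((2:ℝ) ^ n)⁻¹ * 2⁻¹ * T a (n + 1) ≤ ((2:ℝ) ^ n)⁻¹ * 2⁻¹ * T a n := by
        exact mul_le_mul_of_nonneg_left hT (by positivity)
    _ = ((2:ℝ) ^ n)⁻¹ * T a n / 2 := by ring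

lemma s_anti : Antitone (sSeq a) := by
  refine antitone_nat_of_succ_le fun n => ?_
  have h1 := s_half hpos hsum n
  have h2 := (s_pos hpos hsum n).le
  linarith

lemma s_pow_le (n m : ℕ) : sSeq a (n + m) ≤ (2⁻¹:ℝ) ^ m * sSeq a n := by
  induction m with
  | zero => simp
  | succ m ih =>
      have h1 := s_half hpos hsum (n + m)
      have h2 : (0:ℝ) ≤ (2⁻¹:ℝ) ^ m := by positivity
      calc sSeq a (n + (m + 1)) = sSeq a ((n + m) + 1) := by ring_nf
        _ ≤ sSeq a (n + m) / 2 := h1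
        _ ≤ ((2⁻¹:ℝ) ^ m * sSeq a n) / 2 := by linarith
        _ = (2⁻¹:ℝ) ^ (m + 1) * sSeq a n := by rw [pow_succ]; ring

include hdec hdoub in
lemma s_doub (n : ℕ) : sSeq a n ≤ (2 + κ ^ 2) * sSeq a (n + 1) := by
  have hκ : (0:ℝ) < κ := kappa_pos hpos hdec hsum hdoub
  have key : T a n ≤ (1 + κ ^ 2 / 2) * T a (n + 1) := by
    have h1 := T_succ hsum n
    have h2 := lvl_le_doub hpos hdec hsum hdoub n
    have h3 := gap_doub hpos hdec hsum hdoub (n + 1)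
    have h4 := lvl_ge hdec (n + 1)
    have h5 := T_succ hsum (n + 1)
    have h6 := (T_pos hpos hsum (n + 2)).le
    have e : (2:ℝ) ^ (n + 1) = 2 * 2 ^ n := by rw [pow_succ]; ring
    have hpn : (0:ℝ) < 2 ^ n := by positivity
    have step : lvl a n ≤ (κ ^ 2 / 2) * T a (n + 1) := by
      calc lvl a n ≤ κ * ((2:ℝ) ^ n * a (2 ^ (n + 1))) := h2
        _ ≤ κ * ((2:ℝ) ^ n * (κ * a (2 ^ (n + 2)))) := by
            exact mul_le_mul_of_nonneg_left
              (mul_le_mul_of_nonneg_left h3 hpn.le) hκ.le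
        _ = (κ ^ 2 / 2) * ((2:ℝ) ^ (n + 1) * a (2 ^ (n + 2))) := by rw [e]; ring
        _ ≤ (κ ^ 2 / 2) * lvl a (n + 1) := by
            have := h4
            have hh : (0:ℝ) ≤ κ ^ 2 / 2 := by positivity
            have e2 : n + 1 + 1 = n + 2 := by omega
            rw [← e2] at *
            exact mul_le_mul_of_nonneg_left h4 hh
        _ ≤ (κ ^ 2 / 2) * T a (n + 1) := by
            have hh : (0:ℝ) ≤ κ ^ 2 / 2 := by positivity
            have : lvl a (n + 1) ≤ T a (n + 1) := by linarith
            exact mul_le_mul_of_nonneg_left this hh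
    linarith
  rw [sSeq_eq, sSeq_eq]
  have hp : (0:ℝ) < 2 ^ n := by positivity
  calc ((2:ℝ) ^ n)⁻¹ * T a n ≤ ((2:ℝ) ^ n)⁻¹ * ((1 + κ ^ 2 / 2) * T a (n + 1)) :=
        mul_le_mul_of_nonneg_left key (by positivity)
    _ = (2 + κ ^ 2) * (((2:ℝ) ^ (n + 1))⁻¹ * T a (n + 1)) := by
        rw [pow_succ (2:ℝ) n, mul_inv]
        ring

include htot in
lemma T_le_one (n : ℕ) : T a n ≤ 1 := by
  have h1 : T a n ≤ T a 0 := T_antitone hpos hsum (Nat.zero_le n)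
  rw [T_zero hsum htot] at h1
  exact h1

include htot in
lemma s_le_pow (n : ℕ) : sSeq a n ≤ ((2:ℝ) ^ n)⁻¹ := by
  rw [sSeq_eq]
  have h1 := T_le_one hpos hsum htot n
  have h2 : (0:ℝ) ≤ ((2:ℝ) ^ n)⁻¹ := by positivity
  have h3 := mul_le_mul_of_nonneg_left h1 h2
  simpa using h3

include htot in
lemma s_lt_one {n : ℕ} (hn : 1 ≤ n) : sSeq a n < 1 := by
  have h1 := s_le_pow hpos hsum htot n
  have h2 : (2:ℝ) ≤ 2 ^ n := by
    calc (2:ℝ) = 2 ^ 1 := (pow_one 2).symm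
      _ ≤ 2 ^ n := pow_le_pow_right₀ one_le_two hn
  have h3 : ((2:ℝ) ^ n)⁻¹ ≤ 2⁻¹ := by
    apply inv_anti₀ <;> linarith
  linarith

include htot in
lemma s_tendsto : Tendsto (sSeq a) atTop (nhds 0) := by
  refine squeeze_zero (fun n => (s_pos hpos hsum n).le) (s_le_pow hpos hsum htot) ?_
  have h := tendsto_pow_atTop_atTop_of_one_lt (r := (2:ℝ)) one_lt_two
  exact h.inv_tendsto_atTop

end sfacts

section structure_
variable (hpos : ∀ j : ℕ, 0 < a (j + 1)) (hdec : ∀ j : ℕ, a (j + 2) ≤ a (j + 1))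
  (hsum : Summable fun j : ℕ => a (j + 1))
  (hdoub : ∀ n : ℕ, 1 ≤ n → a n ≤ κ * a (2 * n))
  {L : ℕ → ℕ → ℝ}
  (hLe : ∀ k j, j < 2 ^ k → L (k + 1) (2 * j) = L k j)
  (hLo : ∀ k j, j < 2 ^ k →
    L (k + 1) (2 * j + 1) = L k j + cantorLen a (k + 1) (2 * j) + a (2 ^ k + j))

include hpos in
lemma gap_pos (k j : ℕ) : 0 < a (2 ^ k + j) :=
  apos hpos _ (le_trans Nat.one_le_two_pow (Nat.le_add_right _ _))

include hpos hdec hsum hdoub hLe hLo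

lemma right_end {k j : ℕ} (hj : j < 2 ^ k) :
    L (k + 1) (2 * j + 1) + cantorLen a (k + 1) (2 * j + 1)
      = L k j + cantorLen a k j := by
  rw [hLo k j hj, len_split hpos hdec hsum hdoub hj]
  ring

lemma Lmono : ∀ k j, j + 1 < 2 ^ k → L k j + cantorLen a k j ≤ L k (j + 1) := by
  intro k
  induction k with
  | zero => intro j hj; simp at hj
  | succ k ih =>
      intro j hj
      rcases Nat.even_or_odd j with ⟨u, hu⟩ | ⟨u, hu⟩
      · -- j = 2u
        have hu2 : j = 2 * u := by omega
        subst hu2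
        have hu' : u < 2 ^ k := by
          have : (2:ℕ) ^ (k + 1) = 2 * 2 ^ k := by rw [pow_succ]; ring
          omega
        rw [hLo k u hu', hLe k u hu']
        have hg := gap_pos hpos (k := k) (j := u)
        linarith
      · -- j = 2u + 1, j + 1 = 2(u+1)
        have hu2 : j = 2 * u + 1 := hu
        subst hu2
        have hu' : u + 1 < 2 ^ k ∨ u + 1 = 2 ^ k := by
          have : (2:ℕ) ^ (k + 1) = 2 * 2 ^ k := by rw [pow_succ]; ring
          omega
        have huu : u < 2 ^ k := by
          have : (2:ℕ) ^ (k + 1) = 2 * 2 ^ k := by rw [pow_succ]; ring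
          omega
        have hre := right_end hpos hdec hsum hdoub hLe hLo (k := k) (j := u) huu
        have e2 : 2 * u + 1 + 1 = 2 * (u + 1) := by ring
        rw [e2, hLe k (u + 1) (by omega)]
        rcases hu' with hu' | hu'
        · have ihu := ih u (by omega)
          linarith
        · -- impossible: 2u+1+1 = 2*2^k = 2^(k+1), but j+1 < 2^(k+1)
          exfalso
          have : (2:ℕ) ^ (k + 1) = 2 * 2 ^ k := by rw [pow_succ]; ring
          omega

lemma Lsep : ∀ k j j', j ≤ j' → j' < 2 ^ k →
    (j' - j : ℕ) * sSeq a k ≤ κ * (L k j' - L k j) := by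
  intro k j j' hle
  induction j', hle using Nat.le_induction with
  | base => intro _; simp
  | succ j' hjj ih =>
      intro hj'
      have h1 : j' < 2 ^ k := by omega
      have h2 := Lmono hpos hdec hsum hdoub hLe hLo k j' hj'
      have h3 := len_ge hpos hdec hsum hdoub (k := k) (j := j') h1
      have h4 := ih h1
      have hκ := kappa_pos hpos hdec hsum hdoub
      have hcast : ((j' + 1 - j : ℕ) : ℝ) = ((j' - j : ℕ) : ℝ) + 1 := by
        have e : j' + 1 - j = (j' - j) + 1 := by omega
        rw [e]
        push_cast
        ring
      rw [hcast]
      have h5 : sSeq a k ≤ κ * (L k (j' + 1) - L k j') := by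
        calc sSeq a k ≤ κ * cantorLen a k j' := h3
          _ ≤ κ * (L k (j' + 1) - L k j') := by
              refine mul_le_mul_of_nonneg_left ?_ hκ.le
              linarith
      have := s_pos hpos hsum k
      nlinarith [h4, h5]

lemma nested_one : ∀ m i, i < 2 ^ (m + 1) →
    Icc (L (m + 1) i) (L (m + 1) i + cantorLen a (m + 1) i)
      ⊆ Icc (L m (i / 2)) (L m (i / 2) + cantorLen a m (i / 2)) := by
  intro m i hi
  have hpow : (2:ℕ) ^ (m + 1) = 2 * 2 ^ m := by rw [pow_succ]; ring
  rcases Nat.even_or_odd i with ⟨u, hu⟩ | ⟨u, hu⟩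
  · have hu2 : i = 2 * u := by omega
    subst hu2
    have hd : 2 * u / 2 = u := by omega
    have hu' : u < 2 ^ m := by omega
    rw [hd, hLe m u hu']
    refine Icc_subset_Icc le_rfl ?_
    have hsplit := len_split hpos hdec hsum hdoub (k := m) (j := u) hu'
    have hg := (gap_pos hpos (k := m) (j := u)).le
    have hl := len_nonneg hpos hdec hsum hdoub (m + 1) (2 * u + 1)
    linarith
  · have hu2 : i = 2 * u + 1 := hu
    subst hu2
    have hd : (2 * u + 1) / 2 = u := by omega
    have hu' : u < 2 ^ m := by omega
    rw [hd]
    have hre := right_end hpos hdec hsum hdoub hLe hLo (k := m) (j := u) hu'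
    refine Icc_subset_Icc ?_ (by linarith)
    rw [hLo m u hu']
    have hg := (gap_pos hpos (k := m) (j := u)).le
    have hl := len_nonneg hpos hdec hsum hdoub (m + 1) (2 * u)
    linarith

lemma nested : ∀ d k i, i < 2 ^ (k + d) →
    Icc (L (k + d) i) (L (k + d) i + cantorLen a (k + d) i)
      ⊆ Icc (L k (i / 2 ^ d)) (L k (i / 2 ^ d) + cantorLen a k (i / 2 ^ d)) := by
  intro d
  induction d with
  | zero => intro k i hi; simp
  | succ d ih =>
      intro k i hi
      have e : k + (d + 1) = (k + d) + 1 := by omega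
      rw [e] at hi ⊢
      have h1 := nested_one hpos hdec hsum hdoub hLe hLo (k + d) i hi
      have h2 : i / 2 < 2 ^ (k + d) := by
        have : (2:ℕ) ^ (k + d + 1) = 2 * 2 ^ (k + d) := by rw [pow_succ]; ring
        omega
      have h3 := ih k (i / 2) h2
      have e2 : i / 2 / 2 ^ d = i / 2 ^ (d + 1) := by
        rw [Nat.div_div_eq_div_mul, ← pow_succ']
      rw [e2] at h3
      exact h1.trans h3

lemma Literate : ∀ d k j, j < 2 ^ k → L (k + d) (j * 2 ^ d) = L k j := by
  intro d
  induction d with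
  | zero => intro k j hj; simp
  | succ d ih =>
      intro k j hj
      have hb : j * 2 ^ d < 2 ^ (k + d) := by
        rw [pow_add]
        exact (Nat.mul_lt_mul_right (Nat.pow_pos (n := d) two_pos)).mpr hj
      have e : k + (d + 1) = (k + d) + 1 := by omega
      have e2 : j * 2 ^ (d + 1) = 2 * (j * 2 ^ d) := by rw [pow_succ]; ring
      rw [e, e2, hLe (k + d) (j * 2 ^ d) hb, ih k j hj]

variable {C : Set ℝ}
  (hCeq : C = ⋂ k : ℕ, ⋃ j ∈ Finset.range (2 ^ k),
    Icc (L k j) (L k j + cantorLen a k j))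

include hCeq in
lemma Lmem {k j : ℕ} (hj : j < 2 ^ k) : L k j ∈ C := by
  rw [hCeq]
  refine mem_iInter.2 fun m => ?_
  simp only [Set.mem_iUnion, Finset.mem_range, exists_prop]
  rcases le_or_gt k m with hkm | hmk
  · obtain ⟨d, rfl⟩ := Nat.exists_eq_add_of_le hkm
    refine ⟨j * 2 ^ d, ?_, ?_⟩
    · rw [pow_add]
      exact (Nat.mul_lt_mul_right (Nat.pow_pos (n := d) two_pos)).mpr hj
    · rw [Literate hpos hdec hsum hdoub hLe hLo d k j hj]
      exact ⟨le_rfl, by linarith [len_nonneg hpos hdec hsum hdoub (k + d) (j * 2 ^ d)]⟩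
  · obtain ⟨d, rfl⟩ := Nat.exists_eq_add_of_le hmk.le
    refine ⟨j / 2 ^ d, ?_, ?_⟩
    · refine Nat.div_lt_of_lt_mul ?_
      calc j < 2 ^ (m + d) := hj
        _ = 2 ^ d * 2 ^ m := by rw [pow_add]; ring
    · refine nested hpos hdec hsum hdoub hLe hLo d m j hj ?_
      exact ⟨le_rfl, by linarith [len_nonneg hpos hdec hsum hdoub (m + d) j]⟩

omit hpos hdec hsum hdoub hLe hLo in
include hCeq in
lemma memC_level {z : ℝ} (hz : z ∈ C) (m : ℕ) :
    ∃ j, j < 2 ^ m ∧ z ∈ Icc (L m j) (L m j + cantorLen a m j) := by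
  rw [hCeq] at hz
  have := mem_iInter.1 hz m
  simp only [Set.mem_iUnion, Finset.mem_range, exists_prop] at this
  exact this

end structure_

section cover
variable {X : Type*} [PseudoMetricSpace X]

lemma coverNumber_le_card {E : Set X} {r : ℝ} (s : Finset X)
    (h : E ⊆ ⋃ x ∈ s, closedBall x r) : coverNumber r E ≤ s.card :=
  iInf_le_of_le s (iInf_le _ h)

lemma card_le_coverNumber {E : Set X} {r : ℝ} (t : Finset X) (ht : ↑t ⊆ E)
    (hsep : ∀ x ∈ t, ∀ y ∈ t, x ≠ y → 2 * r < dist x y) :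
    (t.card : ℝ≥0∞) ≤ coverNumber r E := by
  classical
  refine le_iInf fun s => le_iInf fun hs => ?_
  refine Nat.cast_le.2 ?_
  by_contra hcon
  push_neg at hcon
  have hmap : ∀ x ∈ t, ∃ c ∈ s, dist x c ≤ r := by
    intro x hx
    have hxE := ht hx
    have := hs hxE
    simp only [Set.mem_iUnion, exists_prop] at this
    obtain ⟨c, hc, hcb⟩ := this
    exact ⟨c, hc, mem_closedBall.1 hcb⟩
  set f : X → X := fun x => if h : ∃ c ∈ s, dist x c ≤ r then h.choose else x with hf
  have hfs : ∀ x ∈ t, f x ∈ s ∧ dist x (f x) ≤ r := by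
    intro x hx
    have hx' := hmap x hx
    simp only [hf, dif_pos hx']
    exact ⟨hx'.choose_spec.1, hx'.choose_spec.2⟩
  obtain ⟨x, hx, y, hy, hxy, hfxy⟩ :=
    Finset.exists_ne_map_eq_of_card_lt_of_maps_to hcon fun x hx => (hfs x hx).1
  have h1 : dist x y ≤ dist x (f x) + dist (f x) y := dist_triangle _ _ _
  have h2 : dist (f x) y = dist y (f y) := by rw [hfxy, dist_comm]
  have h3 := (hfs x hx).2
  have h4 := (hfs y hy).2
  have := hsep x hx y hy hxy
  linarith

lemma one_le_coverNumber {E : Set X} {r : ℝ} {z : X} (hz : z ∈ E) :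
    (1 : ℝ≥0∞) ≤ coverNumber r E := by
  have := card_le_coverNumber (E := E) (r := r) {z}
    (by simpa using hz)
    (by intro x hx y hy hxy; simp at hx hy; subst hx; subst hy; exact absurd rfl hxy)
  simpa using this

end cover

section counting
variable (hpos : ∀ j : ℕ, 0 < a (j + 1)) (hdec : ∀ j : ℕ, a (j + 2) ≤ a (j + 1))
  (hsum : Summable fun j : ℕ => a (j + 1))
  (hdoub : ∀ n : ℕ, 1 ≤ n → a n ≤ κ * a (2 * n))
  {L : ℕ → ℕ → ℝ}
  (hLe : ∀ k j, j < 2 ^ k → L (k + 1) (2 * j) = L k j)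
  (hLo : ∀ k j, j < 2 ^ k →
    L (k + 1) (2 * j + 1) = L k j + cantorLen a (k + 1) (2 * j) + a (2 ^ k + j))
  {C : Set ℝ}
  (hCeq : C = ⋂ k : ℕ, ⋃ j ∈ Finset.range (2 ^ k),
    Icc (L k j) (L k j + cantorLen a k j))

include hpos hdec hsum hdoub hLe hLo hCeq

lemma count_upper {z R r : ℝ} {k mf : ℕ} (hk : k ≤ mf) (hr : 0 < r)
    (hrs : sSeq a mf ≤ r) (hRs : R ≤ (2 + κ ^ 2) * sSeq a k) :
    coverNumber r (closedBall z R ∩ C) ≤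
      (((Nat.floor (κ * (2 * (2 + κ ^ 2) + κ)) + 1) * 2 ^ (mf - k)
        * (Nat.floor (κ / 2) + 1) : ℕ) : ℝ≥0∞) := by
  classical
  have hκ := kappa_pos hpos hdec hsum hdoub
  have hκ1 := kappa_one hpos hdec hsum hdoub
  set K : ℝ := 2 + κ ^ 2 with hK
  set d := mf - k with hd
  have hmf : mf = k + d := by omega
  set B₁ : ℕ := Nat.floor (κ * (2 * K + κ)) + 1 with hB₁
  set M₂ : ℕ := Nat.floor (κ / 2) + 1 with hM₂
  set J : Finset ℕ := (Finset.range (2 ^ k)).filter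
    (fun j => L k j ≤ z + R ∧ z - R ≤ L k j + cantorLen a k j) with hJ
  have hspos := s_pos hpos hsum k
  have hJcard : J.card ≤ B₁ := by
    rcases Finset.eq_empty_or_nonempty J with hJe | hJne
    · simp [hJe]
    · set j0 := J.min' hJne with hj0
      set j1 := J.max' hJne with hj1
      have hj0J := J.min'_mem hJne
      have hj1J := J.max'_mem hJne
      have hj1r : j1 < 2 ^ k := Finset.mem_range.1 (Finset.mem_filter.1 hj1J).1
      have hj0p := (Finset.mem_filter.1 hj0J).2
      have hj1p := (Finset.mem_filter.1 hj1J).2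
      have h01 : j0 ≤ j1 := J.min'_le _ hj1J
      have hsep := Lsep hpos hdec hsum hdoub hLe hLo k j0 j1 h01 hj1r
      have hlen0 := len_le hpos hdec hsum hdoub (k := k) (j := j0)
      have hup : L k j1 - L k j0 ≤ 2 * R + κ * sSeq a k := by
        have h1 : L k j1 ≤ z + R := hj1p.1
        have h2 : z - R ≤ L k j0 + cantorLen a k j0 := hj0p.2
        linarith
      have hdiff : ((j1 - j0 : ℕ) : ℝ) ≤ κ * (2 * K + κ) := by
        have h3 : ((j1 - j0 : ℕ) : ℝ) * sSeq a k ≤ (κ * (2 * K + κ)) * sSeq a k := by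
          calc ((j1 - j0 : ℕ) : ℝ) * sSeq a k ≤ κ * (L k j1 - L k j0) := hsep
            _ ≤ κ * (2 * R + κ * sSeq a k) := mul_le_mul_of_nonneg_left hup hκ.le
            _ ≤ (κ * (2 * K + κ)) * sSeq a k := by nlinarith [hRs, hspos]
        exact le_of_mul_le_mul_right h3 hspos
      have hsub : J ⊆ Finset.Icc j0 j1 := fun x hx =>
        Finset.mem_Icc.2 ⟨J.min'_le x hx, J.le_max' x hx⟩
      calc J.card ≤ (Finset.Icc j0 j1).card := Finset.card_le_card hsub
        _ = j1 + 1 - j0 := Nat.card_Icc j0 j1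
        _ ≤ (j1 - j0) + 1 := by omega
        _ ≤ B₁ := by
            have : (j1 - j0 : ℕ) ≤ Nat.floor (κ * (2 * K + κ)) := Nat.le_floor hdiff
            omega
  set centers : Finset ℝ := ((J ×ˢ Finset.range (2 ^ d)) ×ˢ Finset.range M₂).image
    (fun p => L mf (p.1.1 * 2 ^ d + p.1.2) + (2 * (p.2 : ℝ) + 1) * r) with hcen
  have hcov : closedBall z R ∩ C ⊆ ⋃ x ∈ centers, closedBall x r := by
    rintro x ⟨hxb, hxC⟩
    obtain ⟨j', hj', hxI⟩ := memC_level hCeq hxC mf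
    set j := j' / 2 ^ d with hjdef
    set i := j' % 2 ^ d with hidef
    have hdecomp : j * 2 ^ d + i = j' := by rw [hjdef, hidef, Nat.mul_comm]; exact Nat.div_add_mod _ _
    have hjk : j < 2 ^ k := by
      refine Nat.div_lt_of_lt_mul ?_
      calc j' < 2 ^ mf := hj'
        _ = 2 ^ d * 2 ^ k := by rw [hmf, pow_add]; ring
    have hi : i < 2 ^ d := Nat.mod_lt _ (Nat.pow_pos (n := d) two_pos)
    have hxIk : x ∈ Icc (L k j) (L k j + cantorLen a k j) := by
      have h := nested hpos hdec hsum hdoub hLe hLo d k j' (by rw [← hmf]; exact hj')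
      rw [← hmf] at h
      exact h hxI
    have hxz : |x - z| ≤ R := by
      have := mem_closedBall.1 hxb
      rwa [Real.dist_eq] at this
    have habs := abs_le.1 hxz
    have hjJ : j ∈ J := by
      refine Finset.mem_filter.2 ⟨Finset.mem_range.2 hjk, ?_, ?_⟩
      · have := hxIk.1
        linarith [habs.2]
      · have := hxIk.2
        linarith [habs.1]
    have hlen : cantorLen a mf j' ≤ κ * r :=
      calc cantorLen a mf j' ≤ κ * sSeq a mf := len_le hpos hdec hsum hdoub
        _ ≤ κ * r := mul_le_mul_of_nonneg_left hrs hκ.le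
    have hxl : L mf j' ≤ x := hxI.1
    have hxu : x ≤ L mf j' + cantorLen a mf j' := hxI.2
    have h2r : (0:ℝ) < 2 * r := by linarith
    set y : ℝ := (x - L mf j') / (2 * r) with hy
    have hy0 : 0 ≤ y := div_nonneg (by linarith) h2r.le
    set t := Nat.floor y with ht
    have hty : (t : ℝ) ≤ y := Nat.floor_le hy0
    have hyt : y < t + 1 := Nat.lt_floor_add_one y
    have htM : t < M₂ := by
      have hyκ : y ≤ κ / 2 := by
        rw [hy]
        rw [div_le_div_iff₀ h2r two_pos]
        nlinarith
      have := Nat.floor_le_floor hyκ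
      omega
    have hcmem : L mf j' + (2 * (t : ℝ) + 1) * r ∈ centers := by
      rw [hcen]
      refine Finset.mem_image.2 ⟨((j, i), t), ?_, ?_⟩
      · simp only [Finset.mem_product, Finset.mem_range]
        exact ⟨⟨hjJ, hi⟩, htM⟩
      · simp only [hdecomp]
    refine Set.mem_iUnion₂.2 ⟨_, hcmem, ?_⟩
    rw [mem_closedBall, Real.dist_eq]
    have hxL1 : (t : ℝ) * (2 * r) ≤ x - L mf j' := by
      have := mul_le_mul_of_nonneg_right hty h2r.le
      rwa [hy, div_mul_cancel₀ _ (ne_of_gt h2r)] at this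
    have hxL2 : x - L mf j' < ((t : ℝ) + 1) * (2 * r) := by
      have := mul_lt_mul_of_pos_right hyt h2r
      rwa [hy, div_mul_cancel₀ _ (ne_of_gt h2r)] at this
    rw [abs_le]
    constructor <;> nlinarith
  calc coverNumber r (closedBall z R ∩ C) ≤ centers.card :=
        coverNumber_le_card centers hcov
    _ ≤ ((B₁ * 2 ^ d * M₂ : ℕ) : ℝ≥0∞) := by
        refine Nat.cast_le.2 ?_
        calc centers.card ≤ ((J ×ˢ Finset.range (2 ^ d)) ×ˢ Finset.range M₂).card :=
              Finset.card_image_le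
          _ = J.card * 2 ^ d * M₂ := by
              rw [Finset.card_product, Finset.card_product, Finset.card_range,
                Finset.card_range]
          _ ≤ B₁ * 2 ^ d * M₂ := by
              exact Nat.mul_le_mul_right _ (Nat.mul_le_mul_right _ hJcard)

lemma count_lower {z R r : ℝ} {k mf m0 q : ℕ} (hz : z ∈ C) (hr : 0 < r)
    (hm0 : κ ≤ 2 ^ m0) (hsep2 : κ * (2 * r) < 2 ^ q * sSeq a mf)
    (hk : k + m0 + q ≤ mf) (hR : sSeq a k ≤ R) :
    ((2 ^ (mf - k - m0 - q) : ℕ) : ℝ≥0∞) ≤ coverNumber r (closedBall z R ∩ C) := by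
  classical
  have hκ := kappa_pos hpos hdec hsum hdoub
  obtain ⟨j, hj, hzI⟩ := memC_level hCeq hz (k + m0)
  set d1 := mf - (k + m0) with hd1
  set d2 := d1 - q with hd2
  have hmf : mf = (k + m0) + d1 := by omega
  have hd12 : d1 = d2 + q := by omega
  have he2 : mf - k - m0 - q = d2 := by omega
  have hpq : (0:ℕ) < 2 ^ q := Nat.pow_pos (n := q) two_pos
  have htq : ∀ t : ℕ, t < 2 ^ d2 → t * 2 ^ q < 2 ^ d1 := by
    intro t htl
    calc t * 2 ^ q < 2 ^ d2 * 2 ^ q := (Nat.mul_lt_mul_right hpq).mpr htl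
      _ = 2 ^ d1 := by rw [← pow_add, ← hd12]
  have hidx : ∀ t : ℕ, t < 2 ^ d2 → j * 2 ^ d1 + t * 2 ^ q < 2 ^ mf := by
    intro t htl
    have h1 := htq t htl
    calc j * 2 ^ d1 + t * 2 ^ q < j * 2 ^ d1 + 2 ^ d1 := by omega
      _ = (j + 1) * 2 ^ d1 := by ring
      _ ≤ 2 ^ (k + m0) * 2 ^ d1 := Nat.mul_le_mul_right _ hj
      _ = 2 ^ mf := by rw [← pow_add, ← hmf]
  have hdiv : ∀ t : ℕ, t < 2 ^ d2 → (j * 2 ^ d1 + t * 2 ^ q) / 2 ^ d1 = j := by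
    intro t htl
    have h1 := htq t htl
    have hp1 : (0:ℕ) < 2 ^ d1 := Nat.pow_pos (n := d1) two_pos
    rw [mul_comm j (2 ^ d1), Nat.mul_add_div hp1, Nat.div_eq_of_lt h1]
    omega
  -- each point is within R of z
  have hptball : ∀ t : ℕ, t < 2 ^ d2 →
      L mf (j * 2 ^ d1 + t * 2 ^ q) ∈ closedBall z R := by
    intro t htl
    have hmem : L mf (j * 2 ^ d1 + t * 2 ^ q) ∈
        Icc (L (k + m0) j) (L (k + m0) j + cantorLen a (k + m0) j) := by
      have h := nested hpos hdec hsum hdoub hLe hLo d1 (k + m0) (j * 2 ^ d1 + t * 2 ^ q)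
        (by rw [← hmf]; exact hidx t htl)
      rw [← hmf, hdiv t htl] at h
      refine h ?_
      exact ⟨le_rfl, by
        linarith [len_nonneg hpos hdec hsum hdoub mf (j * 2 ^ d1 + t * 2 ^ q)]⟩
    have hlen : cantorLen a (k + m0) j ≤ R := by
      have h1 := len_le hpos hdec hsum hdoub (k := k + m0) (j := j)
      have h2 := s_pow_le hpos hsum k m0
      have h3 : κ * sSeq a (k + m0) ≤ 2 ^ m0 * ((2⁻¹:ℝ) ^ m0 * sSeq a k) := by
        have hs := (s_pos hpos hsum (k + m0)).le
        have hp : (0:ℝ) ≤ 2 ^ m0 := by positivity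
        nlinarith [mul_le_mul_of_nonneg_left h2 hp]
      have h4 : (2:ℝ) ^ m0 * ((2⁻¹:ℝ) ^ m0 * sSeq a k) = sSeq a k := by
        rw [← mul_assoc, ← mul_pow]
        norm_num
      linarith
    rw [mem_closedBall, Real.dist_eq, abs_le]
    rw [mem_Icc] at hmem hzI
    constructor <;> linarith [hzI.1, hzI.2, hmem.1, hmem.2,
      (s_pos hpos hsum k).le]
  -- strict monotonicity / separation
  have hmono : ∀ t t' : ℕ, t < t' → t' < 2 ^ d2 →
      L mf (j * 2 ^ d1 + t * 2 ^ q) + 2 * r < L mf (j * 2 ^ d1 + t' * 2 ^ q) := by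
    intro t t' htt ht'
    have hle : j * 2 ^ d1 + t * 2 ^ q ≤ j * 2 ^ d1 + t' * 2 ^ q := by
      have : t * 2 ^ q ≤ t' * 2 ^ q := Nat.mul_le_mul_right _ htt.le
      omega
    have hsep := Lsep hpos hdec hsum hdoub hLe hLo mf _ _ hle (hidx t' ht')
    have hsubmul : (t' - t) * 2 ^ q = t' * 2 ^ q - t * 2 ^ q := Nat.sub_mul t' t (2 ^ q)
    have hdiffn : (j * 2 ^ d1 + t' * 2 ^ q) - (j * 2 ^ d1 + t * 2 ^ q)
        = (t' - t) * 2 ^ q := by omega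
    rw [hdiffn] at hsep
    have hge : (2:ℝ) ^ q ≤ (((t' - t) * 2 ^ q : ℕ) : ℝ) := by
      have h1 : 1 ≤ t' - t := by omega
      have h2 : 2 ^ q ≤ (t' - t) * 2 ^ q := by
        calc 2 ^ q = 1 * 2 ^ q := (one_mul _).symm
          _ ≤ (t' - t) * 2 ^ q := Nat.mul_le_mul_right _ h1
      calc (2:ℝ) ^ q = ((2 ^ q : ℕ) : ℝ) := by push_cast; ring
        _ ≤ _ := Nat.cast_le.2 h2
    have hspos := s_pos hpos hsum mf
    have hchain : κ * (2 * r) < κ * (L mf (j * 2 ^ d1 + t' * 2 ^ q)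
        - L mf (j * 2 ^ d1 + t * 2 ^ q)) := by
      calc κ * (2 * r) < 2 ^ q * sSeq a mf := hsep2
        _ ≤ (((t' - t) * 2 ^ q : ℕ) : ℝ) * sSeq a mf :=
            mul_le_mul_of_nonneg_right hge hspos.le
        _ ≤ _ := hsep
    have := lt_of_mul_lt_mul_left hchain hκ.le
    linarith
  set pts : Finset ℝ := (Finset.range (2 ^ d2)).image
    (fun t => L mf (j * 2 ^ d1 + t * 2 ^ q)) with hpts
  have hinj : Set.InjOn (fun t => L mf (j * 2 ^ d1 + t * 2 ^ q))
      ↑(Finset.range (2 ^ d2)) := by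
    intro t ht t' ht' he
    simp only [Finset.coe_range, Set.mem_Iio] at ht ht'
    by_contra hne
    rcases lt_or_gt_of_ne hne with h | h
    · have := hmono t t' h ht'
      simp only [] at he
      rw [he] at this
      linarith
    · have := hmono t' t h ht
      simp only [] at he
      rw [he] at this
      linarith
  have hcard : pts.card = 2 ^ d2 := by
    rw [hpts, Finset.card_image_of_injOn hinj, Finset.card_range]
  have hsub : ↑pts ⊆ closedBall z R ∩ C := by
    intro x hx
    simp only [hpts, Finset.coe_image, Set.mem_image, Finset.coe_range,
      Set.mem_Iio] at hx
    obtain ⟨t, ht, rfl⟩ := hx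
    exact ⟨hptball t ht, Lmem hpos hdec hsum hdoub hLe hLo hCeq (hidx t ht)⟩
  have hsep3 : ∀ x ∈ pts, ∀ y ∈ pts, x ≠ y → 2 * r < dist x y := by
    intro x hx y hy hxy
    simp only [hpts, Finset.mem_image, Finset.mem_range] at hx hy
    obtain ⟨t, ht, rfl⟩ := hx
    obtain ⟨t', ht', rfl⟩ := hy
    have htt : t ≠ t' := fun h => hxy (by rw [h])
    rcases lt_or_gt_of_ne htt with h | h
    · have := hmono t t' h ht'
      rw [Real.dist_eq]
      calc 2 * r < L mf (j * 2 ^ d1 + t' * 2 ^ q) - L mf (j * 2 ^ d1 + t * 2 ^ q) := by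
            linarith
        _ ≤ |L mf (j * 2 ^ d1 + t * 2 ^ q) - L mf (j * 2 ^ d1 + t' * 2 ^ q)| := by
            rw [abs_sub_comm]
            exact le_abs_self _
    · have := hmono t' t h ht
      rw [Real.dist_eq]
      calc 2 * r < L mf (j * 2 ^ d1 + t * 2 ^ q) - L mf (j * 2 ^ d1 + t' * 2 ^ q) := by
            linarith
        _ ≤ |L mf (j * 2 ^ d1 + t * 2 ^ q) - L mf (j * 2 ^ d1 + t' * 2 ^ q)| :=
            le_abs_self _
  have := card_le_coverNumber pts hsub hsep3
  rw [hcard] at this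
  rw [he2]
  exact_mod_cast this

end counting

section scale
variable (hpos : ∀ j : ℕ, 0 < a (j + 1)) (hdec : ∀ j : ℕ, a (j + 2) ≤ a (j + 1))
  (hsum : Summable fun j : ℕ => a (j + 1)) (htot : ∑' j : ℕ, a (j + 1) = 1)

include hpos hsum htot in
lemma exists_scale {x : ℝ} (hx : 0 < x) {K₀ : ℕ} (hxlt : x < sSeq a K₀) :
    ∃ k, K₀ < k ∧ sSeq a k ≤ x ∧ ∀ i < k, x < sSeq a i := by
  classical
  have hex : ∃ k, sSeq a k ≤ x := by
    have ht := s_tendsto hpos hsum htot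
    obtain ⟨k, hk⟩ := (ht.eventually_lt_const hx).exists
    exact ⟨k, hk.le⟩
  refine ⟨Nat.find hex, ?_, Nat.find_spec hex, fun i hi => ?_⟩
  · by_contra hcon
    push_neg at hcon
    have := s_anti hpos hsum (a := a) hcon
    have := Nat.find_spec hex
    linarith [s_anti hpos hsum (a := a) hcon]
  · exact lt_of_not_ge (Nat.find_min hex hi)

include hpos hsum htot in
lemma s_mem_Ioo {k : ℕ} (hk : 1 ≤ k) : sSeq a k ∈ Ioo (0:ℝ) 1 :=
  ⟨s_pos hpos hsum k, s_lt_one hpos hsum htot hk⟩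

include hpos hsum htot in
lemma s_rpow_le_self {Φ : ℝ → ℝ} (hΦ0 : ∀ x ∈ Ioo (0:ℝ) 1, 0 ≤ Φ x) {k : ℕ}
    (hk : 1 ≤ k) : sSeq a k ^ (1 + Φ (sSeq a k)) ≤ sSeq a k := by
  have hmem := s_mem_Ioo hpos hsum htot hk
  have h0 := hΦ0 _ hmem
  calc sSeq a k ^ (1 + Φ (sSeq a k)) ≤ sSeq a k ^ (1:ℝ) :=
        Real.rpow_le_rpow_of_exponent_ge hmem.1 hmem.2.le (by linarith)
    _ = sSeq a k := Real.rpow_one _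

include hpos hsum in
lemma one_le_ratio {k n : ℕ} : 1 ≤ sSeq a k / sSeq a (k + n) := by
  have h1 := s_anti hpos hsum (a := a) (Nat.le_add_right k n)
  have h2 := s_pos hpos hsum (k + n)
  rw [le_div_iff₀ h2]
  linarith

include hpos hsum in
lemma ratio_pos {k n : ℕ} : 0 < sSeq a k / sSeq a (k + n) :=
  div_pos (s_pos hpos hsum k) (s_pos hpos hsum (k + n))

end scale

section incl
variable (hpos : ∀ j : ℕ, 0 < a (j + 1)) (hdec : ∀ j : ℕ, a (j + 2) ≤ a (j + 1))
  (hsum : Summable fun j : ℕ => a (j + 1)) (htot : ∑' j : ℕ, a (j + 1) = 1)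
  (hdoub : ∀ n : ℕ, 1 ≤ n → a n ≤ κ * a (2 * n))
  {L : ℕ → ℕ → ℝ}
  (hLe : ∀ k j, j < 2 ^ k → L (k + 1) (2 * j) = L k j)
  (hLo : ∀ k j, j < 2 ^ k →
    L (k + 1) (2 * j + 1) = L k j + cantorLen a (k + 1) (2 * j) + a (2 ^ k + j))
  {C : Set ℝ}
  (hCeq : C = ⋂ k : ℕ, ⋃ j ∈ Finset.range (2 ^ k),
    Icc (L k j) (L k j + cantorLen a k j))
  {Φ : ℝ → ℝ} (hΦ0 : ∀ x ∈ Ioo (0:ℝ) 1, 0 ≤ Φ x)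
  (hΦm : ∀ x ∈ Ioo (0:ℝ) 1, ∀ y ∈ Ioo (0:ℝ) 1, x ≤ y → x ^ (1 + Φ x) ≤ y ^ (1 + Φ y))
  {φ : ℕ → ℕ}
  (hφ : ∀ n : ℕ, IsLeast {j : ℕ | sSeq a (n + j) ≤ sSeq a n ^ (1 + Φ (sSeq a n))} (φ n))

include hpos hdec hsum htot hdoub hLe hLo hCeq hΦ0 hΦm hφ

lemma BsubA_upper {β : ℝ}
    (hβ : ∃ k₀ : ℕ, ∃ c₀ > (0:ℝ), ∀ k ≥ k₀, ∀ n ≥ φ k,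
      c₀ * 2 ^ n ≤ (sSeq a k / sSeq a (k + n)) ^ β) :
    ∃ c₁ > (0:ℝ), ∃ c₂ > (0:ℝ), ∀ r R : ℝ,
      0 < r → r ≤ R ^ (1 + Φ R) → R ^ (1 + Φ R) ≤ R → R < c₁ → ∀ z ∈ C,
        coverNumber r (closedBall z R ∩ C) ≤ ENNReal.ofReal (c₂ * (R / r) ^ β) := by
  obtain ⟨k₀, c₀, hc₀, hB⟩ := hβ
  have hκ := kappa_pos hpos hdec hsum hdoub
  have hκ1 := kappa_one hpos hdec hsum hdoub
  have hK1 : (1:ℝ) ≤ 2 + κ ^ 2 := by nlinarith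
  have hKpos : (0:ℝ) < 2 + κ ^ 2 := by linarith
  have hβ0 : 0 ≤ β := by
    by_contra hneg
    push_neg at hneg
    obtain ⟨N, hN⟩ := pow_unbounded_of_one_lt (1 / c₀) (by norm_num : (1:ℝ) < 2)
    have h1 := hB k₀ le_rfl (max (φ k₀) N) (le_max_left _ _)
    have hr1 : (sSeq a k₀ / sSeq a (k₀ + max (φ k₀) N)) ^ β ≤ 1 :=
      Real.rpow_le_one_of_one_le_of_nonpos (one_le_ratio hpos hsum) hneg.le
    have h2 : 1 < c₀ * 2 ^ max (φ k₀) N := by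
      have h3 : (1:ℝ) / c₀ < 2 ^ max (φ k₀) N :=
        lt_of_lt_of_le hN (pow_le_pow_right₀ one_le_two (le_max_right _ _))
      rw [div_lt_iff₀ hc₀] at h3
      linarith
    linarith
  refine ⟨sSeq a (max k₀ 1), s_pos hpos hsum _, ?_⟩
  set c₂ : ℝ := ((Nat.floor (κ * (2 * (2 + κ ^ 2) + κ)) + 1)
      * (Nat.floor (κ / 2) + 1) : ℕ) * ((2 + κ ^ 2) ^ 2) ^ β / c₀ with hc₂def
  have hBMpos : (0:ℝ) < ((Nat.floor (κ * (2 * (2 + κ ^ 2) + κ)) + 1)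
      * (Nat.floor (κ / 2) + 1) : ℕ) := by
    have : 0 < (Nat.floor (κ * (2 * (2 + κ ^ 2) + κ)) + 1)
        * (Nat.floor (κ / 2) + 1) := by positivity
    exact_mod_cast this
  have hKrpow : (0:ℝ) < ((2 + κ ^ 2) ^ 2) ^ β := Real.rpow_pos_of_pos (by positivity) β
  have hc₂pos : 0 < c₂ := div_pos (mul_pos hBMpos hKrpow) hc₀
  refine ⟨c₂, hc₂pos, ?_⟩
  intro r R hr hrR hRR hRc z hz
  have hR0 : 0 < R := lt_of_lt_of_le hr (le_trans hrR hRR)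
  have hrleR : r ≤ R := le_trans hrR hRR
  obtain ⟨k, hkK₁, hsk, hmin⟩ := exists_scale hpos hsum htot hR0 hRc
  have hk2 : 2 ≤ k := by
    have : 1 ≤ max k₀ 1 := le_max_right _ _
    omega
  obtain ⟨m, hmgt, hsm, hminm⟩ := exists_scale hpos hsum htot hr
    (lt_of_le_of_lt hrleR (hmin (k - 1) (by omega)))
  have hmk : k ≤ m := by omega
  have hkm1 : 1 ≤ k - 1 := by omega
  have hRmem : R ∈ Ioo (0:ℝ) 1 :=
    ⟨hR0, lt_trans hRc (s_lt_one hpos hsum htot (le_max_right k₀ 1))⟩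
  have hs1mem := s_mem_Ioo hpos hsum htot hkm1
  have hRs1 : R ≤ sSeq a (k - 1) := (hmin (k - 1) (by omega)).le
  have hmono := hΦm R hRmem _ hs1mem hRs1
  have hφle : φ (k - 1) ≤ (m - k) + 1 := by
    refine (hφ (k - 1)).2 ?_
    show sSeq a ((k - 1) + ((m - k) + 1)) ≤ _
    have he : (k - 1) + ((m - k) + 1) = m := by omega
    rw [he]
    calc sSeq a m ≤ r := hsm
      _ ≤ R ^ (1 + Φ R) := hrR
      _ ≤ _ := hmono
  have hBapp := hB (k - 1) (by omega) ((m - k) + 1) hφle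
  rw [show (k - 1) + ((m - k) + 1) = m by omega] at hBapp
  have hsd : sSeq a (k - 1) ≤ (2 + κ ^ 2) * sSeq a k := by
    have h := s_doub hpos hdec hsum hdoub (k - 1)
    rwa [show k - 1 + 1 = k by omega] at h
  have hcount := count_upper hpos hdec hsum hdoub hLe hLo hCeq (z := z) (R := R)
    (r := r) (k := k) (mf := m) hmk hr hsm (by
      have := s_pos hpos hsum k
      nlinarith [hRs1, hsd])
  have hspos_k := s_pos hpos hsum k
  have hspos_m := s_pos hpos hsum m
  have hspos_k1 := s_pos hpos hsum (k - 1)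
  have harith : (((Nat.floor (κ * (2 * (2 + κ ^ 2) + κ)) + 1) * 2 ^ (m - k)
      * (Nat.floor (κ / 2) + 1) : ℕ) : ℝ) ≤ c₂ * (R / r) ^ β := by
    have h2n : (2:ℝ) ^ (m - k) ≤ (sSeq a (k - 1) / sSeq a m) ^ β / (2 * c₀) := by
      have e : (2:ℝ) ^ ((m - k) + 1) = 2 * 2 ^ (m - k) := by rw [pow_succ]; ring
      rw [e] at hBapp
      rw [le_div_iff₀ (by linarith)]
      linarith
    have hratio : sSeq a (k - 1) / sSeq a m ≤ (2 + κ ^ 2) ^ 2 * (R / r) := by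
      have hnum : sSeq a (k - 1) ≤ (2 + κ ^ 2) * R := by
        calc sSeq a (k - 1) ≤ (2 + κ ^ 2) * sSeq a k := hsd
          _ ≤ (2 + κ ^ 2) * R := mul_le_mul_of_nonneg_left hsk hKpos.le
      have hden : r / (2 + κ ^ 2) ≤ sSeq a m := by
        have h1 : r < sSeq a (m - 1) := hminm (m - 1) (by omega)
        have h2 : sSeq a (m - 1) ≤ (2 + κ ^ 2) * sSeq a m := by
          have h := s_doub hpos hdec hsum hdoub (m - 1)
          rwa [show m - 1 + 1 = m by omega] at h
        rw [div_le_iff₀ hKpos]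
        nlinarith
      calc sSeq a (k - 1) / sSeq a m ≤ ((2 + κ ^ 2) * R) / (r / (2 + κ ^ 2)) :=
            div_le_div₀ (by positivity) hnum (div_pos hr hKpos) hden
        _ = (2 + κ ^ 2) ^ 2 * (R / r) := by field_simp
    have hrpow : (sSeq a (k - 1) / sSeq a m) ^ β ≤ ((2 + κ ^ 2) ^ 2 * (R / r)) ^ β :=
      Real.rpow_le_rpow (by positivity) hratio hβ0
    have hmulrpow : ((2 + κ ^ 2) ^ 2 * (R / r)) ^ β
        = ((2 + κ ^ 2) ^ 2) ^ β * (R / r) ^ β :=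
      Real.mul_rpow (by positivity) (by positivity)
    have hRrpow : (0:ℝ) ≤ (R / r) ^ β := (Real.rpow_pos_of_pos (by positivity) β).le
    have hNMnn : (0:ℝ) ≤ (((Nat.floor (κ * (2 * (2 + κ ^ 2) + κ)) + 1)
        * (Nat.floor (κ / 2) + 1) : ℕ) : ℝ) := by positivity
    have hcast : (((Nat.floor (κ * (2 * (2 + κ ^ 2) + κ)) + 1) * 2 ^ (m - k)
        * (Nat.floor (κ / 2) + 1) : ℕ) : ℝ)
        = (((Nat.floor (κ * (2 * (2 + κ ^ 2) + κ)) + 1)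
        * (Nat.floor (κ / 2) + 1) : ℕ) : ℝ) * 2 ^ (m - k) := by push_cast; ring
    have hX : (2:ℝ) ^ (m - k) ≤ (((2 + κ ^ 2) ^ 2) ^ β * (R / r) ^ β) / (2 * c₀) := by
      calc (2:ℝ) ^ (m - k) ≤ (sSeq a (k - 1) / sSeq a m) ^ β / (2 * c₀) := h2n
        _ ≤ (((2 + κ ^ 2) ^ 2) ^ β * (R / r) ^ β) / (2 * c₀) := by
            rw [← hmulrpow]
            exact (div_le_div_iff_of_pos_right (by linarith)).2 hrpow
    rw [hcast]
    calc (((Nat.floor (κ * (2 * (2 + κ ^ 2) + κ)) + 1)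
        * (Nat.floor (κ / 2) + 1) : ℕ) : ℝ) * 2 ^ (m - k)
        ≤ (((Nat.floor (κ * (2 * (2 + κ ^ 2) + κ)) + 1)
          * (Nat.floor (κ / 2) + 1) : ℕ) : ℝ)
          * ((((2 + κ ^ 2) ^ 2) ^ β * (R / r) ^ β) / (2 * c₀)) :=
          mul_le_mul_of_nonneg_left hX hNMnn
      _ ≤ c₂ * (R / r) ^ β := by
          rw [hc₂def]
          have heq : (((Nat.floor (κ * (2 * (2 + κ ^ 2) + κ)) + 1)
              * (Nat.floor (κ / 2) + 1) : ℕ) : ℝ)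
              * ((((2 + κ ^ 2) ^ 2) ^ β * (R / r) ^ β) / (2 * c₀))
              = ((((Nat.floor (κ * (2 * (2 + κ ^ 2) + κ)) + 1)
                * (Nat.floor (κ / 2) + 1) : ℕ) : ℝ) * ((2 + κ ^ 2) ^ 2) ^ β / c₀)
                * (R / r) ^ β / 2 := by
            field_simp
          rw [heq]
          have hnn2 : (0:ℝ) ≤ ((((Nat.floor (κ * (2 * (2 + κ ^ 2) + κ)) + 1)
              * (Nat.floor (κ / 2) + 1) : ℕ) : ℝ) * ((2 + κ ^ 2) ^ 2) ^ β / c₀)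
              * (R / r) ^ β :=
            mul_nonneg (div_nonneg (mul_nonneg hNMnn hKrpow.le) hc₀.le) hRrpow
          linarith
  calc coverNumber r (closedBall z R ∩ C)
      ≤ (((Nat.floor (κ * (2 * (2 + κ ^ 2) + κ)) + 1) * 2 ^ (m - k)
        * (Nat.floor (κ / 2) + 1) : ℕ) : ℝ≥0∞) := hcount
    _ = ENNReal.ofReal (((Nat.floor (κ * (2 * (2 + κ ^ 2) + κ)) + 1) * 2 ^ (m - k)
        * (Nat.floor (κ / 2) + 1) : ℕ) : ℝ) := (ENNReal.ofReal_natCast _).symm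
    _ ≤ ENNReal.ofReal (c₂ * (R / r) ^ β) := ENNReal.ofReal_le_ofReal harith

lemma AsubB_upper {α : ℝ}
    (hA : ∃ c₁ > (0:ℝ), ∃ c₂ > (0:ℝ), ∀ r R : ℝ,
      0 < r → r ≤ R ^ (1 + Φ R) → R ^ (1 + Φ R) ≤ R → R < c₁ → ∀ z ∈ C,
        coverNumber r (closedBall z R ∩ C) ≤ ENNReal.ofReal (c₂ * (R / r) ^ α)) :
    ∃ k₀ : ℕ, ∃ c₀ > (0:ℝ), ∀ k ≥ k₀, ∀ n ≥ φ k,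
      c₀ * 2 ^ n ≤ (sSeq a k / sSeq a (k + n)) ^ α := by
  obtain ⟨c₁, hc₁, c₂, hc₂, hA⟩ := hA
  have hκ := kappa_pos hpos hdec hsum hdoub
  obtain ⟨m0, hm0⟩ := pow_unbounded_of_one_lt κ (one_lt_two (α := ℝ))
  obtain ⟨q, hq⟩ := pow_unbounded_of_one_lt (2 * κ) (one_lt_two (α := ℝ))
  obtain ⟨k₁, hk₁⟩ := ((s_tendsto hpos hsum htot).eventually_lt_const hc₁).exists
  refine ⟨max k₁ 1, 1 / (c₂ * 2 ^ (m0 + q)), by positivity, ?_⟩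
  intro k hk n hn
  have hz₀ : L 0 0 ∈ C :=
    Lmem hpos hdec hsum hdoub hLe hLo hCeq (by norm_num : (0:ℕ) < 2 ^ 0)
  have h1 : 0 < sSeq a (k + n) := s_pos hpos hsum (k + n)
  have hk1 : 1 ≤ k := le_trans (le_max_right _ _) hk
  have hadm1 : sSeq a (k + n) ≤ sSeq a k ^ (1 + Φ (sSeq a k)) :=
    le_trans (s_anti hpos hsum (Nat.add_le_add_left hn k)) (hφ k).1
  have hadm2 : sSeq a k ^ (1 + Φ (sSeq a k)) ≤ sSeq a k :=
    s_rpow_le_self hpos hsum htot hΦ0 hk1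
  have hRc : sSeq a k < c₁ :=
    lt_of_le_of_lt (s_anti hpos hsum (le_trans (le_max_left k₁ 1) hk)) hk₁
  have happ := hA (sSeq a (k + n)) (sSeq a k) h1 hadm1 hadm2 hRc (L 0 0) hz₀
  have hratio := ratio_pos hpos hsum (k := k) (n := n)
  have hrpownn : (0:ℝ) < (sSeq a k / sSeq a (k + n)) ^ α :=
    Real.rpow_pos_of_pos hratio α
  have hxnn : (0:ℝ) ≤ c₂ * (sSeq a k / sSeq a (k + n)) ^ α :=
    mul_nonneg hc₂.le hrpownn.le
  have hsep2 : κ * (2 * sSeq a (k + n)) < 2 ^ q * sSeq a (k + n) := by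
    have : 2 * κ < 2 ^ q := hq
    nlinarith
  rcases le_or_gt (m0 + q) n with hcase | hcase
  · have hcl := count_lower hpos hdec hsum hdoub hLe hLo hCeq (z := L 0 0)
      (R := sSeq a k) (r := sSeq a (k + n)) (k := k) (mf := k + n)
      (m0 := m0) (q := q) hz₀ h1 hm0.le hsep2 (by omega) le_rfl
    have hle := le_trans hcl happ
    rw [← ENNReal.ofReal_natCast] at hle
    have hreal : ((2 ^ (k + n - k - m0 - q) : ℕ) : ℝ)
        ≤ c₂ * (sSeq a k / sSeq a (k + n)) ^ α :=
      (ENNReal.ofReal_le_ofReal_iff hxnn).1 hle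
    have hreal2 : (2:ℝ) ^ (n - m0 - q) ≤ c₂ * (sSeq a k / sSeq a (k + n)) ^ α := by
      have e : k + n - k - m0 - q = n - m0 - q := by omega
      rw [e] at hreal
      push_cast at hreal
      exact hreal
    have he : (2:ℝ) ^ (n - m0 - q) * 2 ^ (m0 + q) = 2 ^ n := by
      rw [← pow_add]
      congr 1
      omega
    have hp : (0:ℝ) < 2 ^ (m0 + q) := by positivity
    rw [div_mul_eq_mul_div, div_le_iff₀ (by positivity), one_mul]
    calc (2:ℝ) ^ n = 2 ^ (n - m0 - q) * 2 ^ (m0 + q) := he.symm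
      _ ≤ (c₂ * (sSeq a k / sSeq a (k + n)) ^ α) * 2 ^ (m0 + q) :=
          mul_le_mul_of_nonneg_right hreal2 hp.le
      _ = (sSeq a k / sSeq a (k + n)) ^ α * (c₂ * 2 ^ (m0 + q)) := by ring
  · have hballC : L 0 0 ∈ closedBall (L 0 0) (sSeq a k) ∩ C :=
      ⟨mem_closedBall_self (s_pos hpos hsum k).le, hz₀⟩
    have hone := one_le_coverNumber (r := sSeq a (k + n)) hballC
    have hle := le_trans hone happ
    have hreal : (1:ℝ) ≤ c₂ * (sSeq a k / sSeq a (k + n)) ^ α := by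
      rw [← ENNReal.ofReal_one] at hle
      exact (ENNReal.ofReal_le_ofReal_iff hxnn).1 hle
    have hp : (0:ℝ) < 2 ^ (m0 + q) := by positivity
    have h2n : (2:ℝ) ^ n ≤ 2 ^ (m0 + q) :=
      pow_le_pow_right₀ one_le_two hcase.le
    rw [div_mul_eq_mul_div, div_le_iff₀ (by positivity), one_mul]
    calc (2:ℝ) ^ n ≤ 2 ^ (m0 + q) := h2n
      _ = 1 * 2 ^ (m0 + q) := (one_mul _).symm
      _ ≤ (c₂ * (sSeq a k / sSeq a (k + n)) ^ α) * 2 ^ (m0 + q) :=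
          mul_le_mul_of_nonneg_right hreal hp.le
      _ = (sSeq a k / sSeq a (k + n)) ^ α * (c₂ * 2 ^ (m0 + q)) := by ring

lemma AsubB_lower {α : ℝ}
    (hA : ∃ c₁ > (0:ℝ), ∃ c₂ > (0:ℝ), ∀ r R : ℝ,
      0 < r → r ≤ R ^ (1 + Φ R) → R ^ (1 + Φ R) ≤ R → R < c₁ → ∀ z ∈ C,
        ENNReal.ofReal (c₂ * (R / r) ^ α) ≤ coverNumber r (closedBall z R ∩ C)) :
    ∃ k₀ : ℕ, ∃ c₀ > (0:ℝ), ∀ k ≥ k₀, ∀ n ≥ φ k,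
      (sSeq a k / sSeq a (k + n)) ^ α ≤ c₀ * 2 ^ n := by
  obtain ⟨c₁, hc₁, c₂, hc₂, hA⟩ := hA
  have hκ := kappa_pos hpos hdec hsum hdoub
  obtain ⟨k₁, hk₁⟩ := ((s_tendsto hpos hsum htot).eventually_lt_const hc₁).exists
  refine ⟨max k₁ 1, (((Nat.floor (κ * (2 * (2 + κ ^ 2) + κ)) + 1)
      * (Nat.floor (κ / 2) + 1) : ℕ) : ℝ) / c₂, by positivity, ?_⟩
  intro k hk n hn
  have hz₀ : L 0 0 ∈ C :=
    Lmem hpos hdec hsum hdoub hLe hLo hCeq (by norm_num : (0:ℕ) < 2 ^ 0)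
  have h1 : 0 < sSeq a (k + n) := s_pos hpos hsum (k + n)
  have hk1 : 1 ≤ k := le_trans (le_max_right _ _) hk
  have hadm1 : sSeq a (k + n) ≤ sSeq a k ^ (1 + Φ (sSeq a k)) :=
    le_trans (s_anti hpos hsum (Nat.add_le_add_left hn k)) (hφ k).1
  have hadm2 : sSeq a k ^ (1 + Φ (sSeq a k)) ≤ sSeq a k :=
    s_rpow_le_self hpos hsum htot hΦ0 hk1
  have hRc : sSeq a k < c₁ :=
    lt_of_le_of_lt (s_anti hpos hsum (le_trans (le_max_left k₁ 1) hk)) hk₁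
  have happ := hA (sSeq a (k + n)) (sSeq a k) h1 hadm1 hadm2 hRc (L 0 0) hz₀
  have hcount := count_upper hpos hdec hsum hdoub hLe hLo hCeq (z := L 0 0)
    (R := sSeq a k) (r := sSeq a (k + n)) (k := k) (mf := k + n)
    (Nat.le_add_right k n) h1 le_rfl (by nlinarith [s_pos hpos hsum k, sq_nonneg κ])
  have hle := le_trans happ hcount
  rw [← ENNReal.ofReal_natCast] at hle
  have hNnn : (0:ℝ) ≤ (((Nat.floor (κ * (2 * (2 + κ ^ 2) + κ)) + 1) * 2 ^ (k + n - k)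
      * (Nat.floor (κ / 2) + 1) : ℕ) : ℝ) := by positivity
  have hreal := (ENNReal.ofReal_le_ofReal_iff hNnn).1 hle
  have hcast : (((Nat.floor (κ * (2 * (2 + κ ^ 2) + κ)) + 1) * 2 ^ (k + n - k)
      * (Nat.floor (κ / 2) + 1) : ℕ) : ℝ)
      = (((Nat.floor (κ * (2 * (2 + κ ^ 2) + κ)) + 1)
        * (Nat.floor (κ / 2) + 1) : ℕ) : ℝ) * 2 ^ n := by
    rw [show k + n - k = n by omega]
    push_cast
    ring
  rw [hcast] at hreal
  rw [div_mul_eq_mul_div, le_div_iff₀ hc₂]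
  linarith

lemma BsubA_lower {β : ℝ}
    (hβ : ∃ k₀ : ℕ, ∃ c₀ > (0:ℝ), ∀ k ≥ k₀, ∀ n ≥ φ k,
      (sSeq a k / sSeq a (k + n)) ^ β ≤ c₀ * 2 ^ n) :
    ∃ c₁ > (0:ℝ), ∃ c₂ > (0:ℝ), ∀ r R : ℝ,
      0 < r → r ≤ R ^ (1 + Φ R) → R ^ (1 + Φ R) ≤ R → R < c₁ → ∀ z ∈ C,
        ENNReal.ofReal (c₂ * (R / r) ^ β) ≤ coverNumber r (closedBall z R ∩ C) := by
  obtain ⟨k₀, c₀, hc₀, hB⟩ := hβ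
  have hκ := kappa_pos hpos hdec hsum hdoub
  have hκ1 := kappa_one hpos hdec hsum hdoub
  have hKpos : (0:ℝ) < 2 + κ ^ 2 := by positivity
  rcases lt_or_ge β 0 with hβ0 | hβ0
  · -- negative exponent: trivial
    refine ⟨1, one_pos, 1, one_pos, ?_⟩
    intro r R hr hrR hRR hRc z hz
    have hrleR : r ≤ R := le_trans hrR hRR
    have hRr1 : 1 ≤ R / r := by rw [le_div_iff₀ hr]; linarith
    have hle1 : (R / r) ^ β ≤ 1 :=
      Real.rpow_le_one_of_one_le_of_nonpos hRr1 hβ0.le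
    have hmem : z ∈ closedBall z R ∩ C :=
      ⟨mem_closedBall_self (by linarith), hz⟩
    calc ENNReal.ofReal (1 * (R / r) ^ β) ≤ ENNReal.ofReal 1 := by
          rw [one_mul]
          exact ENNReal.ofReal_le_ofReal hle1
      _ = 1 := ENNReal.ofReal_one
      _ ≤ coverNumber r (closedBall z R ∩ C) := one_le_coverNumber hmem
  · obtain ⟨m0, hm0⟩ := pow_unbounded_of_one_lt κ (one_lt_two (α := ℝ))
    obtain ⟨q, hq⟩ := pow_unbounded_of_one_lt (2 * κ * (2 + κ ^ 2)) (one_lt_two (α := ℝ))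
    refine ⟨sSeq a (max k₀ 1), s_pos hpos hsum _, 1 / (c₀ * 2 ^ (m0 + q + 1)),
      by positivity, ?_⟩
    intro r R hr hrR hRR hRc z hz
    have hR0 : 0 < R := lt_of_lt_of_le hr (le_trans hrR hRR)
    have hrleR : r ≤ R := le_trans hrR hRR
    obtain ⟨k, hkK₁, hsk, hmin⟩ := exists_scale hpos hsum htot hR0 hRc
    have hk2 : 2 ≤ k := by
      have : 1 ≤ max k₀ 1 := le_max_right _ _
      omega
    obtain ⟨m, hmgt, hsm, hminm⟩ := exists_scale hpos hsum htot hr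
      (lt_of_le_of_lt hrleR (hmin (k - 1) (by omega)))
    have hmk : k ≤ m := by omega
    have hkm1 : 1 ≤ k - 1 := by omega
    have hRmem : R ∈ Ioo (0:ℝ) 1 :=
      ⟨hR0, lt_trans hRc (s_lt_one hpos hsum htot (le_max_right k₀ 1))⟩
    have hs1mem := s_mem_Ioo hpos hsum htot hkm1
    have hRs1 : R ≤ sSeq a (k - 1) := (hmin (k - 1) (by omega)).le
    have hmono := hΦm R hRmem _ hs1mem hRs1
    have hφle : φ (k - 1) ≤ (m - k) + 1 := by
      refine (hφ (k - 1)).2 ?_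
      show sSeq a ((k - 1) + ((m - k) + 1)) ≤ _
      have he : (k - 1) + ((m - k) + 1) = m := by omega
      rw [he]
      calc sSeq a m ≤ r := hsm
        _ ≤ R ^ (1 + Φ R) := hrR
        _ ≤ _ := hmono
    have hBapp := hB (k - 1) (by omega) ((m - k) + 1) hφle
    rw [show (k - 1) + ((m - k) + 1) = m by omega] at hBapp
    have hspos_m := s_pos hpos hsum m
    have hspos_k1 := s_pos hpos hsum (k - 1)
    -- (R/r)^β ≤ (s_{k-1}/s_m)^β ≤ c₀ 2^{(m-k)+1}
    have hRr : R / r ≤ sSeq a (k - 1) / sSeq a m :=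
      div_le_div₀ hspos_k1.le hRs1 (s_pos hpos hsum m) hsm
    have hrpow : (R / r) ^ β ≤ (sSeq a (k - 1) / sSeq a m) ^ β :=
      Real.rpow_le_rpow (by positivity) hRr hβ0
    have hkey : (R / r) ^ β ≤ c₀ * 2 ^ ((m - k) + 1) := le_trans hrpow hBapp
    have hc₂R : (1 / (c₀ * 2 ^ (m0 + q + 1))) * (R / r) ^ β
        ≤ (2:ℝ) ^ (m - k) / 2 ^ (m0 + q) := by
      have hp1 : (0:ℝ) < c₀ * 2 ^ (m0 + q + 1) := by positivity
      rw [div_mul_eq_mul_div, one_mul, div_le_div_iff₀ hp1 (by positivity)]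
      have e1 : (2:ℝ) ^ ((m - k) + 1) = 2 * 2 ^ (m - k) := by rw [pow_succ]; ring
      have e2 : (2:ℝ) ^ (m0 + q + 1) = 2 * 2 ^ (m0 + q) := by rw [pow_succ]; ring
      rw [e2]
      calc (R / r) ^ β * 2 ^ (m0 + q) ≤ (c₀ * 2 ^ ((m - k) + 1)) * 2 ^ (m0 + q) :=
            mul_le_mul_of_nonneg_right hkey (by positivity)
        _ = 2 ^ (m - k) * (c₀ * (2 * 2 ^ (m0 + q))) := by rw [e1]; ring
    rcases le_or_gt (m0 + q) (m - k) with hcase | hcase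
    · have hsep2 : κ * (2 * r) < 2 ^ q * sSeq a m := by
        have h1 : r < sSeq a (m - 1) := hminm (m - 1) (by omega)
        have h2 : sSeq a (m - 1) ≤ (2 + κ ^ 2) * sSeq a m := by
          have h := s_doub hpos hdec hsum hdoub (m - 1)
          rwa [show m - 1 + 1 = m by omega] at h
        nlinarith
      have hcl := count_lower hpos hdec hsum hdoub hLe hLo hCeq (z := z) (R := R)
        (r := r) (k := k) (mf := m) (m0 := m0) (q := q) hz hr hm0.le hsep2
        (by omega) hsk
      refine le_trans ?_ hcl
      rw [← ENNReal.ofReal_natCast]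
      refine ENNReal.ofReal_le_ofReal ?_
      have hcast2 : ((2 ^ (m - k - m0 - q) : ℕ) : ℝ) = 2 ^ (m - k) / 2 ^ (m0 + q) := by
        push_cast
        rw [eq_div_iff (by positivity), ← pow_add]
        congr 1
        omega
      rw [hcast2]
      exact hc₂R
    · have hmem : z ∈ closedBall z R ∩ C := ⟨mem_closedBall_self hR0.le, hz⟩
      refine le_trans ?_ (one_le_coverNumber hmem)
      rw [← ENNReal.ofReal_one]
      refine ENNReal.ofReal_le_ofReal ?_
      have h2 : (2:ℝ) ^ (m - k) / 2 ^ (m0 + q) ≤ 1 := by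
        rw [div_le_one (by positivity)]
        exact pow_le_pow_right₀ one_le_two hcase.le
      linarith

end incl

end CantorAux

/-- Formulas for the `Φ`-dimensions of the Cantor set associated with a decreasing,
summable, doubling gap sequence `a` (gaps `a 1, a 2, …`, `Σ_{j≥1} a j = 1`), in terms of
the sequence `s` of average step lengths and the depth function `φ`. -/
theorem phiDim_cantorSet_formula (a : ℕ → ℝ)
    (hpos : ∀ j : ℕ, 0 < a (j + 1)) (hdec : ∀ j : ℕ, a (j + 2) ≤ a (j + 1))
    (hsum : Summable fun j : ℕ => a (j + 1)) (htot : ∑' j : ℕ, a (j + 1) = 1)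
    (κ : ℝ) (hdoub : ∀ n : ℕ, 1 ≤ n → a n ≤ κ * a (2 * n))
    (Φ : ℝ → ℝ) (hΦ : IsDimensionFunction Φ)
    (φ : ℕ → ℕ) (hφ : IsDepthFunction a Φ φ)
    (C : Set ℝ) (hC : IsCantorSetOf a C) :
    upperPhiDim Φ C = sInf {β : ℝ | ∃ k₀ : ℕ, ∃ c₀ > (0:ℝ), ∀ k ≥ k₀, ∀ n ≥ φ k,
        c₀ * 2 ^ n ≤ (sSeq a k / sSeq a (k + n)) ^ β} ∧
    lowerPhiDim Φ C = sSup {β : ℝ | ∃ k₀ : ℕ, ∃ c₀ > (0:ℝ), ∀ k ≥ k₀, ∀ n ≥ φ k,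
        (sSeq a k / sSeq a (k + n)) ^ β ≤ c₀ * 2 ^ n} := by
  obtain ⟨hΦ0, hΦm, -⟩ := hΦ
  obtain ⟨L, hL0, hLe, hLo, hCeq⟩ := hC
  constructor
  · show sInf _ = sInf _
    congr 1
    ext β
    exact ⟨fun h => CantorAux.AsubB_upper hpos hdec hsum htot hdoub hLe hLo hCeq
        hΦ0 hΦm hφ h,
      fun h => CantorAux.BsubA_upper hpos hdec hsum htot hdoub hLe hLo hCeq
        hΦ0 hΦm hφ h⟩
  · show sSup _ = sSup _
    congr 1
    ext β
    exact ⟨fun h => CantorAux.AsubB_lower hpos hdec hsum htot hdoub hLe hLo hCeq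
        hΦ0 hΦm hφ h,
      fun h => CantorAux.BsubA_lower hpos hdec hsum htot hdoub hLe hLo hCeq
        hΦ0 hΦm hφ h⟩

end
end

section
/- Let φ : ℕ → ℕ be an increasing function with φ(n) → ∞ and φ(n)/n → 0 as n → ∞. Then there exists a central Cantor set E ⊆ [0,1] such that, letting Φ be the dimension function associated with the depth function φ and the set E (so that R^{1+Φ(R)} = s_{n+φ(n)} for R ∈ (s_{n+1}, s_n]), and setting Φ_t = tΦ for t > 0, one has dim̄_{Φ_t} E ∈ [dim_qA E, dim_A E] for every t > 0, yet lim_{t→0⁺} dim̄_{Φ_t} E < dim_A E. -/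
open Set Metric Filter Topology
open scoped ENNReal

noncomputable section

namespace CCD

variable (φ : ℕ → ℕ)

/-- least n with M ≤ φ n (0 if none) -/
def psi (M : ℕ) : ℕ := sInf {n | M ≤ φ n}

def nk : ℕ → ℕ := fun k => Nat.rec 0 (fun k ih => 8 * (ih + k + 2) + 2 * psi φ ((k+1)*(k+1))) k

@[simp] lemma nk_zero : nk φ 0 = 0 := rfl

def RunP (j : ℕ) : Prop := ∃ k ∈ Finset.Icc 1 (j+1), nk φ k ≤ j ∧ j < nk φ k + k

instance : DecidablePred (RunP φ) := fun _ => by unfold RunP; infer_instance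

def rc (a b : ℕ) : ℕ := ((Finset.range b).filter fun i => RunP φ (a + i)).card

def ff : ℕ → ℕ := fun n => Nat.rec 0 (fun j ih => ih + (if RunP φ j then 2 else 3)) n

@[simp] lemma ff_zero : ff φ 0 = 0 := rfl
lemma ff_succ (n : ℕ) : ff φ (n+1) = ff φ n + (if RunP φ n then 2 else 3) := rfl

lemma ff_add (a b : ℕ) : ff φ (a + b) + rc φ a b = ff φ a + 3 * b := by
  induction b with
  | zero => simp [rc]
  | succ b ih =>
      have hsplit : rc φ a (b+1) = rc φ a b + (if RunP φ (a+b) then 1 else 0) := by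
        simp [rc, Finset.range_add_one, Finset.filter_insert]
        split <;> simp [Finset.card_insert_of_notMem, Finset.mem_filter]
      rw [← Nat.add_assoc, ff_succ, hsplit]
      split <;> omega
  
lemma rc_le (a b : ℕ) : rc φ a b ≤ b := le_trans (Finset.card_filter_le _ _) (by simp)

lemma ff_succ_ge (n : ℕ) : ff φ n + 2 ≤ ff φ (n+1) := by rw [ff_succ]; split <;> omega
lemma ff_succ_le (n : ℕ) : ff φ (n+1) ≤ ff φ n + 3 := by rw [ff_succ]; split <;> omega

lemma ff_mono : StrictMono (ff φ) := strictMono_nat_of_lt_succ (fun n => by have := ff_succ_ge φ n; omega)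

lemma two_mul_le_ff (n : ℕ) : 2 * n ≤ ff φ n := by
  induction n with
  | zero => simp
  | succ n ih => have := ff_succ_ge φ n; omega

lemma ff_le_three_mul (n : ℕ) : ff φ n ≤ 3 * n := by
  induction n with
  | zero => simp
  | succ n ih => have := ff_succ_le φ n; omega

lemma ff_add_le (a b : ℕ) : ff φ (a + b) ≤ ff φ a + 3 * b := by
  have := ff_add φ a b; omega

lemma ff_add_ge (a b : ℕ) : ff φ a + 2 * b ≤ ff φ (a + b) := by
  induction b with
  | zero => simp
  | succ b ih =>
      have := ff_succ_ge φ (a + b)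
      have : a + (b+1) = (a+b)+1 := by ring
      rw [this]
      have := ff_succ_ge φ (a + b); omega


lemma psi_spec (hmono : Monotone φ) (htop : Tendsto φ atTop atTop) (M : ℕ) : M ≤ φ (psi φ M) := by
  have h : ∃ n, M ≤ φ n := (htop.eventually (eventually_ge_atTop M)).exists
  exact Nat.sInf_mem h

lemma nk_succ (k : ℕ) : nk φ (k+1) = 8 * (nk φ k + k + 2) + 2 * psi φ ((k+1)*(k+1)) := rfl

lemma nk_succ_ge (k : ℕ) : 8 * (nk φ k + k + 2) ≤ nk φ (k+1) := by rw [nk_succ]; omega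

lemma nk_psi (k : ℕ) : 2 * psi φ ((k+1)*(k+1)) ≤ nk φ (k+1) := by rw [nk_succ]; omega

lemma nk_mono : Monotone (nk φ) := monotone_nat_of_le_succ (fun k => by have := nk_succ_ge φ k; omega)

lemma nk_ge_8k (k : ℕ) (hk : 1 ≤ k) : 8 * k ≤ nk φ k := by
  obtain ⟨k, rfl⟩ := Nat.exists_eq_add_of_le hk
  rw [Nat.add_comm]
  have := nk_succ_ge φ k; omega

lemma runP_of_mem {k j : ℕ} (hk : 1 ≤ k) (h1 : nk φ k ≤ j) (h2 : j < nk φ k + k) : RunP φ j := by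
  refine ⟨k, Finset.mem_Icc.2 ⟨hk, ?_⟩, h1, h2⟩
  have := nk_ge_8k φ k hk; omega

lemma runP_elim {j : ℕ} (h : RunP φ j) : ∃ k, 1 ≤ k ∧ nk φ k ≤ j ∧ j < nk φ k + k := by
  obtain ⟨k, hk, h1, h2⟩ := h
  exact ⟨k, (Finset.mem_Icc.1 hk).1, h1, h2⟩

lemma rc_run_full (k : ℕ) (hk : 1 ≤ k) : rc φ (nk φ k) k = k := by
  rw [rc, Finset.filter_true_of_mem, Finset.card_range]
  intro i hi
  exact runP_of_mem φ hk (by omega) (by simp at hi; omega)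

lemma window (hmono : Monotone φ) (htop : Tendsto φ atTop atTop) {t : ℝ} (ht : 0 < t) :
    ∃ C : ℕ, ∀ n m : ℕ, 2*t*(φ n : ℝ) ≤ 3*m → 2 * rc φ n m ≤ m + C := by
  set Kt := ⌈6/t⌉₊ + 1 with hKt
  refine ⟨2 * (nk φ Kt + Kt), fun n m hm => ?_⟩
  by_cases hrc : rc φ n m = 0
  · omega
  -- K := largest k with 1 ≤ k ∧ nk k < n + m
  set P : ℕ → Prop := fun k => 1 ≤ k ∧ nk φ k < n + m with hP
  have hPex : ∃ k, k ≤ n + m ∧ P k := by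
    have : ∃ i ∈ Finset.range m, RunP φ (n + i) := by
      rw [rc] at hrc
      obtain ⟨i, hi⟩ := Finset.card_ne_zero.1 hrc
      simp only [Finset.mem_filter] at hi
      exact ⟨i, hi.1, hi.2⟩
    obtain ⟨i, hi, hrun⟩ := this
    obtain ⟨k, hk1, hk2, hk3⟩ := runP_elim φ hrun
    simp only [Finset.mem_range] at hi
    have hnk : 8 * k ≤ nk φ k := nk_ge_8k φ k hk1
    exact ⟨k, by omega, hk1, by omega⟩
  obtain ⟨k₀, hk₀b, hk₀⟩ := hPex
  set K := Nat.findGreatest P (n + m) with hK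
  have hPK : P K := Nat.findGreatest_spec hk₀b hk₀
  have hle : ∀ k, P k → k ≤ K := by
    intro k hk
    have hb : k ≤ n + m := by
      have := nk_ge_8k φ k hk.1; omega
    exact Nat.le_findGreatest hb hk
  -- every run index in window has its run k ≤ K
  have hmem : ∀ i, i < m → RunP φ (n + i) → n + i < nk φ K + K := by
    intro i hi hrun
    obtain ⟨k, hk1, hk2, hk3⟩ := runP_elim φ hrun
    have hkK : k ≤ K := hle k ⟨hk1, by omega⟩
    have := nk_mono φ hkK
    omega
  by_cases hKt : K ≤ Kt
  · -- small K: crude bound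
    have : rc φ n m ≤ nk φ Kt + Kt := by
      have hsub : ((Finset.range m).filter fun i => RunP φ (n + i)) ⊆
          Finset.range (nk φ Kt + Kt) := by
        intro i hi
        simp only [Finset.mem_filter, Finset.mem_range] at hi ⊢
        have := hmem i hi.1 hi.2
        have := nk_mono φ hKt
        omega
      calc rc φ n m ≤ (Finset.range (nk φ Kt + Kt)).card := Finset.card_le_card hsub
        _ = _ := Finset.card_range _
    omega
  · -- large K
    push_neg at hKt
    have hK1 : 1 ≤ K := hPK.1
    obtain ⟨K', hKeq⟩ : ∃ K', K = K' + 1 := ⟨K - 1, by omega⟩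
    rw [hKeq] at hPK hmem hle hKt
    set Q := nk φ K' + K' + 1 with hQ
    have hQle : 8 * Q ≤ nk φ (K'+1) := by have := nk_succ_ge φ K'; omega
    have h8K : 8 * (K'+1) ≤ nk φ (K'+1) := nk_ge_8k φ _ (by omega)
    -- refined split
    have hsplit : ∀ i, i < m → RunP φ (n + i) →
        n + i < Q ∨ (nk φ (K'+1) ≤ n + i ∧ n + i < nk φ (K'+1) + (K'+1)) := by
      intro i hi hrun
      obtain ⟨k, hk1, hk2, hk3⟩ := runP_elim φ hrun
      have hkK : k ≤ K' + 1 := hle k ⟨hk1, by omega⟩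
      rcases Nat.lt_or_ge k (K'+1) with hlt | hge
      · left
        have h1 : nk φ k ≤ nk φ K' := nk_mono φ (by omega)
        omega
      · right
        have : k = K' + 1 := by omega
        subst this
        exact ⟨hk2, hk3⟩
    rcases Nat.lt_or_ge (nk φ (K'+1)) (2 * m) with hcase | hcase
    · -- m large: rc ≤ Q + K ≤ nk K /4 ≤ m/2
      have hrcle : rc φ n m ≤ Q + (K'+1) := by
        have hsub : ((Finset.range m).filter fun i => RunP φ (n + i)) ⊆
            (Finset.range m).filter (fun i => n + i < Q) ∪
            (Finset.range m).filter (fun i => nk φ (K'+1) ≤ n + i ∧ n + i < nk φ (K'+1) + (K'+1)) := by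
          intro i hi
          simp only [Finset.mem_filter, Finset.mem_union, Finset.mem_range] at hi ⊢
          rcases hsplit i hi.1 hi.2 with h | h
          · exact Or.inl ⟨hi.1, h⟩
          · exact Or.inr ⟨hi.1, h⟩
        have h1 : ((Finset.range m).filter (fun i => n + i < Q)).card ≤ Q := by
          have : (Finset.range m).filter (fun i => n + i < Q) ⊆ Finset.range Q := by
            intro i hi; simp only [Finset.mem_filter, Finset.mem_range] at hi ⊢; omega
          simpa using Finset.card_le_card this
        have h2 : ((Finset.range m).filter
            (fun i => nk φ (K'+1) ≤ n + i ∧ n + i < nk φ (K'+1) + (K'+1))).card ≤ K' + 1 := by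
          have : (Finset.range m).filter
              (fun i => nk φ (K'+1) ≤ n + i ∧ n + i < nk φ (K'+1) + (K'+1)) ⊆
              Finset.image (fun j => j - n) (Finset.Ico (nk φ (K'+1)) (nk φ (K'+1) + (K'+1))) := by
            intro i hi
            simp only [Finset.mem_filter, Finset.mem_range] at hi
            simp only [Finset.mem_image, Finset.mem_Ico]
            exact ⟨n + i, ⟨hi.2.1, hi.2.2⟩, by omega⟩
          calc _ ≤ _ := Finset.card_le_card this
            _ ≤ (Finset.Ico (nk φ (K'+1)) (nk φ (K'+1) + (K'+1))).card := Finset.card_image_le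
            _ = K' + 1 := by rw [Nat.card_Ico]; omega
        calc rc φ n m ≤ _ := Finset.card_le_card hsub
          _ ≤ _ + _ := Finset.card_union_le _ _
          _ ≤ Q + (K'+1) := by omega
      omega
    · -- m small: window starts deep; lower runs invisible, K ≤ m/4 via φ
      have hn2 : nk φ (K'+1) + 1 ≤ 2 * n := by
        have : nk φ (K'+1) < n + m := hPK.2
        omega
      have hQn : Q < n := by omega
      have hrcle : rc φ n m ≤ K' + 1 := by
        have hsub : ((Finset.range m).filter fun i => RunP φ (n + i)) ⊆
            Finset.image (fun j => j - n) (Finset.Ico (nk φ (K'+1)) (nk φ (K'+1) + (K'+1))) := by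
          intro i hi
          simp only [Finset.mem_filter, Finset.mem_range] at hi
          rcases hsplit i hi.1 hi.2 with h | h
          · omega
          · simp only [Finset.mem_image, Finset.mem_Ico]
            exact ⟨n + i, ⟨h.1, h.2⟩, by omega⟩
        calc rc φ n m ≤ _ := Finset.card_le_card hsub
          _ ≤ (Finset.Ico (nk φ (K'+1)) (nk φ (K'+1) + (K'+1))).card := Finset.card_image_le
          _ = K' + 1 := by rw [Nat.card_Ico]; omega
      -- φ n ≥ (K'+1)^2
      have hnpsi : psi φ ((K'+1)*(K'+1)) + 1 ≤ n := by
        have := nk_psi φ K'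
        omega
      have hφ : (K'+1)*(K'+1) ≤ φ n :=
        le_trans (psi_spec φ hmono htop _) (hmono (by omega))
      -- real arithmetic : m ≥ 4(K'+1)
      have hKreal : (6:ℝ)/t ≤ (K'+1 : ℕ) := by
        have h1 : (6:ℝ)/t ≤ (⌈6/t⌉₊ : ℝ) := Nat.le_ceil _
        have h2 : (Kt:ℝ) ≤ ((K'+1 : ℕ):ℝ) := by exact_mod_cast Nat.le_of_lt hKt
        have h3 : ((⌈6/t⌉₊:ℕ):ℝ) ≤ (Kt:ℝ) := by exact_mod_cast (by omega : ⌈6/t⌉₊ ≤ Kt)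
        linarith
    
      have hm4 : 4 * (K'+1) ≤ m := by
        have h1 : ((K'+1)*(K'+1) : ℝ) ≤ (φ n : ℝ) := by exact_mod_cast hφ
        have h2 : (12:ℝ) * (K'+1) ≤ 2*t*((K'+1)*(K'+1)) := by
          have : (6:ℝ) * (K'+1) ≤ t * ((K'+1)*(K'+1)) := by
            have hk0 : (0:ℝ) < ((K'+1:ℕ):ℝ) := by positivity
            have := mul_le_mul_of_nonneg_right hKreal (le_of_lt hk0)
            rw [div_mul_eq_mul_div, div_le_iff₀ ht] at this
            push_cast at this ⊢
            nlinarith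
          nlinarith
        have h3 : (12:ℝ) * (K'+1) ≤ 3 * m := by
          have := mul_le_mul_of_nonneg_left h1 (by positivity : (0:ℝ) ≤ 2*t)
          push_cast at this h2 hm ⊢
          nlinarith
        have : ((4 * (K'+1) : ℕ) : ℝ) ≤ (m:ℕ) := by push_cast; push_cast at h3; linarith
        exact_mod_cast this
      omega


def ss (n : ℕ) : ℝ := (2:ℝ) ^ (-(ff φ n : ℝ))

lemma ss_pos (n : ℕ) : 0 < ss φ n := Real.rpow_pos_of_pos two_pos _

lemma ss_zero : ss φ 0 = 1 := by simp [ss, ff_zero]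

lemma ss_le_ss {a b : ℕ} (h : ff φ b ≤ ff φ a) : ss φ a ≤ ss φ b := by
  rw [ss, ss, Real.rpow_le_rpow_left_iff one_lt_two]
  simp only [neg_le_neg_iff]
  exact_mod_cast h

lemma ss_anti {a b : ℕ} (h : a ≤ b) : ss φ b ≤ ss φ a := ss_le_ss φ ((ff_mono φ).monotone h)

lemma ss_lt_ss {a b : ℕ} (h : ff φ b < ff φ a) : ss φ a < ss φ b := by
  rw [ss, ss, Real.rpow_lt_rpow_left_iff one_lt_two]
  simp only [neg_lt_neg_iff]
  exact_mod_cast h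

lemma ss_succ_lt (n : ℕ) : ss φ (n+1) < ss φ n := ss_lt_ss φ (by have := ff_succ_ge φ n; omega)

lemma four_mul_ss_succ (n : ℕ) : 4 * ss φ (n+1) ≤ ss φ n := by
  have h : ss φ (n+1) ≤ (2:ℝ) ^ (-((ff φ n : ℝ) + 2)) := by
    rw [ss, Real.rpow_le_rpow_left_iff one_lt_two]
    have := ff_succ_ge φ n
    have : ((ff φ n : ℝ) + 2) ≤ (ff φ (n+1) : ℝ) := by exact_mod_cast this
    linarith
  have h2 : (2:ℝ) ^ (-((ff φ n : ℝ) + 2)) = ss φ n / 4 := by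
    rw [ss, neg_add, Real.rpow_add two_pos]
    norm_num
    ring
  rw [h2] at h
  linarith

lemma ss_succ_ge (n : ℕ) : ss φ n / 8 ≤ ss φ (n+1) := by
  have h : (2:ℝ) ^ (-((ff φ n : ℝ) + 3)) ≤ ss φ (n+1) := by
    rw [ss, Real.rpow_le_rpow_left_iff one_lt_two]
    have := ff_succ_le φ n
    have : (ff φ (n+1) : ℝ) ≤ (ff φ n : ℝ) + 3 := by exact_mod_cast this
    linarith
  have h2 : (2:ℝ) ^ (-((ff φ n : ℝ) + 3)) = ss φ n / 8 := by
    rw [ss, neg_add, Real.rpow_add two_pos]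
    norm_num
    ring
  linarith [h2 ▸ h]

lemma ss_le_one (n : ℕ) : ss φ n ≤ 1 := by
  have := ss_anti φ (Nat.zero_le n); rwa [ss_zero] at this

lemma ss_lt_one (n : ℕ) (h : 1 ≤ n) : ss φ n < 1 := by
  have := ss_anti φ h
  have h1 := ss_succ_lt φ 0
  rw [ss_zero] at h1
  linarith

lemma ss_tendsto : Tendsto (ss φ) atTop (nhds 0) := by
  have h8 : ∀ n, ss φ n ≤ (1/2)^n := by
    intro n
    induction n with
    | zero => simp [ss_zero]
    | succ n ih =>
        have := ss_succ_lt φ n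
        have h4 := four_mul_ss_succ φ n
        have := ss_pos φ (n+1)
        calc ss φ (n+1) ≤ ss φ n / 4 := by linarith
          _ ≤ (1/2)^n / 4 := by linarith
          _ ≤ (1/2)^(n+1) := by rw [pow_succ]; linarith [pow_nonneg (by norm_num : (0:ℝ) ≤ 1/2) n]
  have hpos := ss_pos φ
  refine squeeze_zero (fun n => (hpos n).le) h8 ?_
  exact tendsto_pow_atTop_nhds_zero_of_lt_one (by norm_num) (by norm_num)

-- key identity: ratio of ss as a power of 2
lemma ss_div (a b : ℕ) (h : a ≤ b) : ss φ a / ss φ b = (2:ℝ) ^ ((ff φ b - ff φ a : ℕ) : ℝ) := by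
  rw [ss, ss, ← Real.rpow_sub two_pos]
  congr 1
  have := (ff_mono φ).monotone h
  push_cast [Nat.cast_sub this]
  ring

lemma ss_rpow (n : ℕ) (x : ℝ) : (ss φ n) ^ x = (2:ℝ) ^ (-(ff φ n : ℝ) * x) := by
  rw [ss, ← Real.rpow_mul (by norm_num)]
  

def LL : ℕ → ℕ → ℝ := fun k => Nat.rec (fun _ => 0)
  (fun k ih j => ih (j / 2) + (if j % 2 = 1 then ss φ k - ss φ (k+1) else 0)) k

lemma LL_zero (j : ℕ) : LL φ 0 j = 0 := rfl

lemma LL_succ (k j : ℕ) :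
    LL φ (k+1) j = LL φ k (j / 2) + (if j % 2 = 1 then ss φ k - ss φ (k+1) else 0) := rfl

lemma LL_even (k j : ℕ) : LL φ (k+1) (2*j) = LL φ k j := by
  rw [LL_succ]
  simp [Nat.mul_div_cancel_left, Nat.mul_mod_right]

lemma LL_odd (k j : ℕ) : LL φ (k+1) (2*j+1) = LL φ k j + (ss φ k - ss φ (k+1)) := by
  rw [LL_succ]
  have h1 : (2*j+1) / 2 = j := by omega
  have h2 : (2*j+1) % 2 = 1 := by omega
  simp [h1, h2]

lemma LL_zero_idx (k : ℕ) : LL φ k 0 = 0 := by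
  induction k with
  | zero => rfl
  | succ k ih => rw [LL_succ]; simp [ih]

/-- step-k interval -/
def II (k j : ℕ) : Set ℝ := Icc (LL φ k j) (LL φ k j + ss φ k)

lemma II_nested (k j : ℕ) : II φ (k+1) j ⊆ II φ k (j / 2) := by
  rw [II, II, LL_succ]
  have hs := ss_succ_lt φ k
  apply Icc_subset_Icc
  · split <;> [skip; simp] <;> nlinarith [ss_pos φ (k+1), ss_pos φ k]
  · split <;> [skip; skip] <;> nlinarith [ss_pos φ (k+1), ss_pos φ k]

lemma II_nested_anc (k d j : ℕ) : II φ (k+d) j ⊆ II φ k (j / 2^d) := by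
  induction d generalizing j with
  | zero => simp
  | succ d ih =>
      intro x hx
      have h1 : II φ (k+d+1) j ⊆ II φ (k+d) (j / 2) := II_nested φ (k+d) j
      have h2 := ih (j := j / 2) (h1 hx)
      rwa [Nat.div_div_eq_div_mul, ← pow_succ'] at h2

lemma LL_gap (k : ℕ) : ∀ j, j + 1 < 2^k → LL φ k j + 3 * ss φ k ≤ LL φ k (j+1) := by
  induction k with
  | zero => intro j h; simp at h
  | succ k ih =>
      intro j h
      rcases Nat.even_or_odd j with ⟨i, rfl⟩ | ⟨i, rfl⟩
      · have h1 : i + i = 2 * i := by ring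
        rw [h1, show 2*i+1 = 2*i+1 from rfl, LL_even, LL_odd]
        have h4 := four_mul_ss_succ φ k
        have hp := ss_pos φ (k+1)
        linarith
      · have h1 : 2*i+1+1 = 2*(i+1) := by ring
        rw [h1, LL_odd, LL_even]
        have hik : i + 1 < 2^k := by
          have : 2*i+1+1 < 2^(k+1) := h
          rw [pow_succ] at this; omega
        have := ih i hik
        have h4 := four_mul_ss_succ φ k
        have hp := ss_pos φ (k+1)
        have hp2 := ss_pos φ k
        linarith

lemma LL_gap_mul (k j i : ℕ) (h : j + i < 2^k) : LL φ k j + 3 * ss φ k * i ≤ LL φ k (j+i) := by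
  induction i with
  | zero => simp
  | succ i ih =>
      have h1 : j + i < 2^k := by omega
      have h2 := ih (by omega)
      have h3 := LL_gap φ k (j+i) (by omega)
      push_cast
      have : j + (i+1) = (j + i) + 1 := by ring
      rw [this]
      push_cast at h2
      linarith

lemma LL_strictMonoOn (k : ℕ) {a b : ℕ} (hab : a < b) (hb : b < 2^k) : LL φ k a < LL φ k b := by
  obtain ⟨i, rfl⟩ := Nat.exists_eq_add_of_lt hab
  have := LL_gap_mul φ k a (i+1) (by omega)
  have hp := ss_pos φ k
  have hi : (0:ℝ) < (i:ℝ)+1 := by positivity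
  have : LL φ k a + 3 * ss φ k * ((i:ℝ)+1) ≤ LL φ k (a + i + 1) := by
    push_cast at this; rw [show a + (i+1) = a + i + 1 from by ring] at this; push_cast at this; linarith
  nlinarith

def Eset : Set ℝ := ⋂ k, ⋃ j ∈ Finset.range (2^k), Icc (LL φ k j) (LL φ k j + ss φ k)

lemma mem_Eset {z : ℝ} : z ∈ Eset φ ↔ ∀ k, ∃ j < 2^k, z ∈ II φ k j := by
  simp only [Eset, mem_iInter, mem_iUnion, Finset.mem_range, II, exists_prop]

lemma Eset_subset_level (p : ℕ) : Eset φ ⊆ ⋃ j ∈ Finset.range (2^p), II φ p j := by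
  intro z hz
  obtain ⟨j, hj, hm⟩ := (mem_Eset φ).1 hz p
  exact mem_iUnion₂.2 ⟨j, Finset.mem_range.2 hj, hm⟩

lemma zero_mem_Eset : (0:ℝ) ∈ Eset φ := by
  rw [mem_Eset]
  intro k
  refine ⟨0, pow_pos (by norm_num) k, ?_⟩
  rw [II, LL_zero_idx]
  exact ⟨le_refl 0, by simpa using (ss_pos φ k).le⟩

lemma LL_left_desc (p j d : ℕ) : LL φ (p+d) (j * 2^d) = LL φ p j := by
  induction d with
  | zero => simp
  | succ d ih =>
      have h1 : j * 2^(d+1) = 2 * (j * 2^d) := by ring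
      rw [h1, show p + (d+1) = (p+d) + 1 from rfl, LL_even, ih]

lemma LL_mem_Eset (p j : ℕ) (hj : j < 2^p) : LL φ p j ∈ Eset φ := by
  rw [mem_Eset]
  intro k
  rcases le_or_gt k p with hk | hk
  · obtain ⟨d, rfl⟩ := Nat.exists_eq_add_of_le hk
    refine ⟨j / 2^d, ?_, ?_⟩
    · apply Nat.div_lt_of_lt_mul
      rw [pow_add] at hj
      rw [Nat.mul_comm]
      exact hj
    · apply II_nested_anc φ k d j
      rw [II]
      refine ⟨le_refl _, ?_⟩
      linarith [ss_pos φ (k+d)]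
  · obtain ⟨d, rfl⟩ := Nat.exists_eq_add_of_le hk.le
    refine ⟨j * 2^d, ?_, ?_⟩
    · rw [pow_add]
      have h2d : 0 < 2^d := pow_pos (by norm_num) d
      exact (Nat.mul_lt_mul_right h2d).2 hj
    · rw [II, LL_left_desc]
      refine ⟨le_refl _, ?_⟩
      linarith [ss_pos φ (p+d)]

lemma ss_add_le (k m : ℕ) : ss φ (k+m) ≤ ss φ k * (1/4)^m := by
  induction m with
  | zero => simp
  | succ m ih =>
      have h4 := four_mul_ss_succ φ (k+m)
      have hp := ss_pos φ (k+m+1)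
      have hq := ss_pos φ (k+m)
      calc ss φ (k+(m+1)) = ss φ ((k+m)+1) := by ring_nf
        _ ≤ ss φ (k+m) / 4 := by linarith
        _ ≤ ss φ k * (1/4)^m / 4 := by linarith
        _ = ss φ k * (1/4)^(m+1) := by rw [pow_succ]; ring

lemma cantorLen_eq (k j : ℕ) (hj : j < 2^k) :
    cantorLen (centralGaps (ss φ)) k j = ss φ k := by
  have hterm : ∀ m, ∑ i ∈ Finset.range (2 ^ m),
      centralGaps (ss φ) (2 ^ (k + m) + j * 2 ^ m + i)
      = 2^m * ss φ (k+m) - 2^(m+1) * ss φ (k+m+1) := by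
    intro m
    have hlog : ∀ i < 2^m, Nat.log 2 (2 ^ (k + m) + j * 2 ^ m + i) = k + m := by
      intro i hi
      apply Nat.log_eq_of_pow_le_of_lt_pow
      · omega
      · have h1 : j * 2^m + i < 2^(k+m) := by
          have : j * 2^m ≤ (2^k - 1) * 2^m := by
            apply Nat.mul_le_mul_right
            omega
          have h2 : (2^k - 1) * 2^m + 2^m = 2^(k+m) := by
            rw [Nat.sub_mul, ← pow_add]
            have : 2^m ≤ 2^(k+m) := Nat.pow_le_pow_right (by norm_num) (by omega)
            omega
          omega
        rw [pow_succ]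
        omega
    rw [Finset.sum_congr rfl (fun i hi => by
      rw [centralGaps, hlog i (Finset.mem_range.1 hi)])]
    rw [Finset.sum_const, Finset.card_range]
    push_cast
    ring
  rw [cantorLen]
  set F : ℕ → ℝ := fun m => ∑ i ∈ Finset.range (2 ^ m),
      centralGaps (ss φ) (2 ^ (k + m) + j * 2 ^ m + i) with hF
  have hsum : HasSum F (ss φ k) := by
    have hnn : ∀ m, 0 ≤ F m := by
      intro m
      rw [hF]
      simp only
      rw [hterm m]
      have h4 := four_mul_ss_succ φ (k+m)
      have h2m : (0:ℝ) < 2^m := by positivity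
      have hkey : (0:ℝ) ≤ ss φ (k+m) - 2 * ss φ (k+m+1) := by linarith [ss_pos φ (k+m+1)]
      have := mul_nonneg h2m.le hkey
      have hit : (2:ℝ)^(m+1) = 2 * 2^m := by ring
      rw [hit]
      linarith
    rw [hasSum_iff_tendsto_nat_of_nonneg hnn]
    have hps : ∀ M, ∑ m ∈ Finset.range M, F m = ss φ k - 2^M * ss φ (k+M) := by
      intro M
      have hFm : ∀ m, F m
          = (fun m => (2:ℝ)^m * ss φ (k+m)) m - (fun m => (2:ℝ)^m * ss φ (k+m)) (m+1) := by
        intro m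
        rw [hF]
        simp only
        rw [hterm m, pow_succ]
        ring_nf
      rw [Finset.sum_congr rfl (fun m _ => hFm m)]
      rw [Finset.sum_range_sub' (fun m => (2:ℝ)^m * ss φ (k+m))]
      simp
    simp only [hps]
    have hu : Tendsto (fun M => (2:ℝ)^M * ss φ (k+M)) atTop (nhds 0) := by
      apply squeeze_zero (fun M => mul_nonneg (by positivity) (ss_pos φ (k+M)).le)
        (fun M => ?_) (g := fun M => ss φ k * (1/2)^M)
      · have := tendsto_pow_atTop_nhds_zero_of_lt_one (by norm_num : (0:ℝ) ≤ 1/2) (by norm_num)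
        simpa using this.const_mul (ss φ k)
      · have := ss_add_le φ k M
        have h2M : (0:ℝ) < 2^M := by positivity
        calc (2:ℝ)^M * ss φ (k+M) ≤ 2^M * (ss φ k * (1/4)^M) := by
              nlinarith [ss_pos φ (k+M)]
          _ = ss φ k * (1/2)^M := by
              rw [show ((1:ℝ)/2) = 2 * (1/4) by norm_num, mul_pow]
              ring
    have := (tendsto_const_nhds (x := ss φ k)).sub hu
    simpa using this
  rw [hsum.tsum_eq]

lemma isCentralCantorSet : IsCentralCantorSet (ss φ) (Eset φ) := by
  refine ⟨ss_zero φ, fun n => ⟨ss_pos φ (n+1), ?_⟩, ?_⟩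
  · have := four_mul_ss_succ φ n
    have := ss_pos φ (n+1)
    linarith
  · refine ⟨LL φ, LL_zero_idx φ 0, fun k j hj => LL_even φ k j, fun k j hj => ?_, ?_⟩
    · rw [LL_odd, cantorLen_eq φ (k+1) (2*j) (by rw [pow_succ]; omega), centralGaps]
      have hlog : Nat.log 2 (2^k + j) = k := by
        apply Nat.log_eq_of_pow_le_of_lt_pow
        · omega
        · rw [pow_succ]; omega
      rw [hlog]
      ring
    · rw [Eset]
      apply iInter_congr
      intro k
      apply iUnion_congr
      intro j
      apply iUnion_congr
      intro hj
      rw [cantorLen_eq φ k j (Finset.mem_range.1 hj)]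

lemma coverNumber_le_card {r : ℝ} {E' : Set ℝ} (t : Finset ℝ)
    (h : E' ⊆ ⋃ x ∈ t, closedBall x r) : coverNumber r E' ≤ t.card := by
  rw [coverNumber]
  exact (iInf_le _ t).trans (iInf_le _ h)

lemma one_le_coverNumber {r : ℝ} {E' : Set ℝ} (h : E'.Nonempty) : 1 ≤ coverNumber r E' := by
  rw [coverNumber]
  refine le_iInf fun t => le_iInf fun ht => ?_
  obtain ⟨x, hx⟩ := h
  obtain ⟨c, hc, _⟩ := mem_iUnion₂.1 (ht hx)
  have : 0 < t.card := Finset.card_pos.2 ⟨c, hc⟩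
  exact_mod_cast this

lemma sep_le_coverNumber {r : ℝ} {E' : Set ℝ} (P : Finset ℝ) (hP : ∀ x ∈ P, x ∈ E')
    (hsep : ∀ x ∈ P, ∀ y ∈ P, x ≠ y → 2*r < |x - y|) :
    (P.card : ℝ≥0∞) ≤ coverNumber r E' := by
  rw [coverNumber]
  refine le_iInf fun t => le_iInf fun ht => ?_
  have hcard : P.card ≤ t.card := by
    have hex : ∀ x ∈ P, ∃ c ∈ t, x ∈ closedBall c r := by
      intro x hx
      obtain ⟨c, hc, hxc⟩ := mem_iUnion₂.1 (ht (hP x hx))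
      exact ⟨c, hc, hxc⟩
    classical
    set f : ℝ → ℝ := fun x => if h : ∃ c ∈ t, x ∈ closedBall c r then h.choose else 0 with hf
    apply Finset.card_le_card_of_injOn f
    · intro x hx
      have h := hex x hx
      simp only [hf, dif_pos h]
      exact h.choose_spec.1
    · intro x hx y hy hxy
      by_contra hne
      have h1 := hex x hx
      have h2 := hex y hy
      have hx1 : x ∈ closedBall (f x) r := by simp only [hf, dif_pos h1]; exact h1.choose_spec.2
      have hy1 : y ∈ closedBall (f y) r := by simp only [hf, dif_pos h2]; exact h2.choose_spec.2
      rw [← hxy] at hy1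
      have := hsep x hx y hy hne
      rw [mem_closedBall, Real.dist_eq] at hx1 hy1
      have habs : |x - y| ≤ 2*r := by
        have := abs_sub_abs_le_abs_sub (x - f x) (y - f x)
        have h3 : |(x - f x) - (y - f x)| = |x - y| := by ring_nf
        calc |x - y| = |(x - f x) - (y - f x)| := by ring_nf
          _ ≤ |x - f x| + |y - f x| := abs_sub _ _
          _ ≤ 2*r := by linarith
      linarith
  exact_mod_cast hcard

lemma cover_main {z : ℝ} (hz : z ∈ Eset φ) {R r : ℝ} (n m : ℕ) (hr : 0 < r)
    (hRs : R ≤ ss φ n) (hsr : ss φ (n+m) ≤ r) :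
    coverNumber r (closedBall z R ∩ Eset φ) ≤ ((2^(m+1) : ℕ) : ℝ≥0∞) := by
  classical
  set p := n + m with hp
  set S : Finset ℕ := (Finset.range (2^p)).filter
    (fun j => (II φ p j ∩ (closedBall z R ∩ Eset φ)).Nonempty) with hS
  have hcover : closedBall z R ∩ Eset φ ⊆ ⋃ c ∈ S.image (LL φ p), closedBall c r := by
    intro x hx
    obtain ⟨j, hj, hxj⟩ := (mem_Eset φ).1 hx.2 p
    have hjS : j ∈ S := by
      rw [hS, Finset.mem_filter]
      exact ⟨Finset.mem_range.2 hj, ⟨x, hxj, hx⟩⟩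
    refine mem_iUnion₂.2 ⟨LL φ p j, Finset.mem_image_of_mem _ hjS, ?_⟩
    rw [mem_closedBall, Real.dist_eq]
    rw [II, mem_Icc] at hxj
    rw [abs_le]
    constructor <;> linarith
  have hcard : S.card ≤ 2^(m+1) := by
    rcases S.eq_empty_or_nonempty with hemp | hne
    · simp [hemp]
    · set a := (S.min' hne) / 2^m with ha
      have hmin := S.min'_mem hne
      have hanc : ∀ j ∈ S, ∀ j' ∈ S, j / 2^m ≤ j' / 2^m + 1 := by
        intro j hj j' hj'
        by_contra hcon
        push_neg at hcon
        rw [hS, Finset.mem_filter] at hj hj'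
        obtain ⟨x, hxj, hxB, _⟩ := hj.2
        obtain ⟨y, hyj, hyB, _⟩ := hj'.2
        set b := j / 2^m with hb
        set b' := j' / 2^m with hb'
        have hblt : b < 2^n := by
          rw [hb]
          apply Nat.div_lt_of_lt_mul
          rw [Nat.mul_comm, ← pow_add]
          exact Finset.mem_range.1 hj.1
        have hxI : x ∈ II φ n b := II_nested_anc φ n m j hxj
        have hyI : y ∈ II φ n b' := II_nested_anc φ n m j' hyj
        have hgap : LL φ n b' + 3 * ss φ n * ((b - b' : ℕ) : ℝ) ≤ LL φ n b := by
          have := LL_gap_mul φ n b' (b - b') (by omega)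
          rwa [show b' + (b - b') = b by omega] at this
        rw [II, mem_Icc] at hxI hyI
        have hxy : |x - y| ≤ 2 * R := by
          have h1 := mem_closedBall.1 hxB
          have h2 := mem_closedBall.1 hyB
          rw [Real.dist_eq] at h1 h2
          rw [abs_le] at h1 h2 ⊢
          constructor <;> linarith
        have hbb : (2:ℝ) ≤ ((b - b' : ℕ) : ℝ) := by
          have : 2 ≤ b - b' := by omega
          exact_mod_cast this
        have hsp := ss_pos φ n
        have : x - y ≥ 5 * ss φ n := by nlinarith
        have : |x - y| ≥ 5 * ss φ n := le_trans this (le_abs_self _)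
        nlinarith
      have hsub : S ⊆ Finset.Ico (a * 2^m) ((a+2) * 2^m) := by
        intro j hj
        rw [Finset.mem_Ico]
        constructor
        · rw [ha]
          have h1 : S.min' hne / 2^m ≤ j / 2^m := Nat.div_le_div_right (S.min'_le j hj)
          calc S.min' hne / 2^m * 2^m ≤ j / 2^m * 2^m := Nat.mul_le_mul_right _ h1
            _ ≤ j := Nat.div_mul_le_self j _
        · have h2 : j / 2^m ≤ a + 1 := hanc j hj _ hmin
          have h3 : j / 2^m < a + 2 := by omega
          exact (Nat.div_lt_iff_lt_mul (pow_pos (by norm_num) m)).1 h3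
      calc S.card ≤ (Finset.Ico (a * 2^m) ((a+2) * 2^m)).card := Finset.card_le_card hsub
        _ = (a+2) * 2^m - a * 2^m := Nat.card_Ico _ _
        _ = 2^(m+1) := by rw [pow_succ]; ring_nf; omega
  calc coverNumber r (closedBall z R ∩ Eset φ) ≤ (S.image (LL φ p)).card :=
        coverNumber_le_card _ hcover
    _ ≤ (S.card : ℝ≥0∞) := by exact_mod_cast Finset.card_image_le
    _ ≤ _ := by exact_mod_cast hcard

lemma cover_lower (n m : ℕ) :
    ((2^m : ℕ) : ℝ≥0∞) ≤ coverNumber (ss φ (n+m)) (closedBall 0 (ss φ n) ∩ Eset φ) := by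
  classical
  set P : Finset ℝ := (Finset.range (2^m)).image (LL φ (n+m)) with hP
  have hinj : Set.InjOn (LL φ (n+m)) (Finset.range (2^m)) := by
    intro i hi j hj hij
    simp only [Finset.coe_range, mem_Iio] at hi hj
    by_contra hne
    have h2 : (2:ℕ)^m ≤ 2^(n+m) := Nat.pow_le_pow_right (by norm_num) (by omega)
    rcases Nat.lt_or_ge i j with h | h
    · have := LL_strictMonoOn φ (n+m) h (by omega)
      linarith [this.ne hij]
    · have hji : j < i := by omega
      have := LL_strictMonoOn φ (n+m) hji (by omega)
      linarith [this.ne hij.symm]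
  have hcard : P.card = 2^m := by
    rw [hP, Finset.card_image_of_injOn hinj, Finset.card_range]
  rw [← hcard]
  apply sep_le_coverNumber
  · intro x hx
    rw [hP, Finset.mem_image] at hx
    obtain ⟨i, hi, rfl⟩ := hx
    rw [Finset.mem_range] at hi
    have h2 : (2:ℕ)^m ≤ 2^(n+m) := Nat.pow_le_pow_right (by norm_num) (by omega)
    constructor
    · have hii : LL φ (n+m) i ∈ II φ n (i / 2^m) := by
        apply II_nested_anc φ n m i
        exact ⟨le_refl _, by linarith [ss_pos φ (n+m)]⟩
      have hi0 : i / 2^m = 0 := Nat.div_eq_of_lt hi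
      rw [hi0, II, LL_zero_idx] at hii
      rw [mem_closedBall, Real.dist_eq]
      rw [mem_Icc] at hii
      rw [abs_le]
      constructor <;> simp <;> linarith
    · exact LL_mem_Eset φ (n+m) i (by omega)
  · intro x hx y hy hne
    rw [hP, Finset.mem_image] at hx hy
    obtain ⟨i, hi, rfl⟩ := hx
    obtain ⟨j, hj, rfl⟩ := hy
    rw [Finset.mem_range] at hi hj
    have h2 : (2:ℕ)^m ≤ 2^(n+m) := Nat.pow_le_pow_right (by norm_num) (by omega)
    have hij : i ≠ j := fun h => hne (by rw [h])
    have hsp := ss_pos φ (n+m)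
    rcases Nat.lt_or_ge i j with h | h
    · have hg := LL_gap_mul φ (n+m) i (j - i) (by omega)
      rw [show i + (j-i) = j by omega] at hg
      have h1 : (1:ℝ) ≤ ((j - i : ℕ) : ℝ) := by
        have : 1 ≤ j - i := by omega
        exact_mod_cast this
      rw [abs_sub_comm]
      rw [abs_of_nonneg (by nlinarith)]
      nlinarith
    · have hji : j < i := by omega
      have hg := LL_gap_mul φ (n+m) j (i - j) (by omega)
      rw [show j + (i-j) = i by omega] at hg
      have h1 : (1:ℝ) ≤ ((i - j : ℕ) : ℝ) := by
        have : 1 ≤ i - j := by omega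
        exact_mod_cast this
      rw [abs_of_nonneg (by nlinarith)]
      nlinarith

lemma exists_level {R : ℝ} (h0 : 0 < R) (h1 : R ≤ 1) : ∃ n, ss φ (n+1) < R ∧ R ≤ ss φ n := by
  have hex : ∃ n, ss φ n < R := ((ss_tendsto φ).eventually (gt_mem_nhds h0)).exists
  classical
  set N := Nat.find hex with hN
  have hNs : ss φ N < R := Nat.find_spec hex
  have hN0 : N ≠ 0 := by
    intro h
    rw [h, ss_zero] at hNs
    linarith
  obtain ⟨n, hn⟩ : ∃ n, N = n + 1 := ⟨N - 1, by omega⟩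
  rw [hn] at hNs
  refine ⟨n, hNs, ?_⟩
  have := Nat.find_min hex (m := n) (by omega)
  linarith

def dimSet (Φ' : ℝ → ℝ) (E : Set ℝ) : Set ℝ :=
  {α : ℝ | ∃ c₁ > (0:ℝ), ∃ c₂ > (0:ℝ), ∀ r R : ℝ,
    0 < r → r ≤ R ^ (1 + Φ' R) → R ^ (1 + Φ' R) ≤ R → R < c₁ → ∀ z ∈ E,
      coverNumber r (closedBall z R ∩ E) ≤ ENNReal.ofReal (c₂ * (R / r) ^ α)}

lemma upperPhiDim_eq (Φ' : ℝ → ℝ) (E : Set ℝ) : upperPhiDim Φ' E = sInf (dimSet Φ' E) := rfl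

lemma exists_m (n : ℕ) {r : ℝ} (hr : 0 < r) : ∃ m, ss φ (n+m) ≤ r := by
  obtain ⟨k, hk⟩ := ((ss_tendsto φ).eventually (gt_mem_nhds hr)).exists
  exact ⟨k, le_trans (ss_anti φ (by omega)) hk.le⟩

lemma cast_le_ofReal {m : ℕ} {x : ℝ} (h : ((2:ℝ))^(m+1) ≤ x) :
    ((2^(m+1):ℕ) : ℝ≥0∞) ≤ ENNReal.ofReal x := by
  rw [← ENNReal.ofReal_natCast]
  apply ENNReal.ofReal_le_ofReal
  push_cast
  exact h

lemma one_mem_dimSet (Φ' : ℝ → ℝ) : (1:ℝ) ∈ dimSet Φ' (Eset φ) := by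
  refine ⟨1, one_pos, 8, by norm_num, ?_⟩
  intro r R hr h1 h2 hc z hz
  have hrR : r ≤ R := h1.trans h2
  have hR : 0 < R := lt_of_lt_of_le hr hrR
  obtain ⟨n, hn1, hn2⟩ := exists_level φ hR hc.le
  classical
  have hm := exists_m φ n hr
  set m := Nat.find hm with hmdef
  have hsr : ss φ (n+m) ≤ r := Nat.find_spec hm
  have hmain := cover_main φ hz n m hr hn2 hsr
  have hRr1 : (1:ℝ) ≤ R / r := (one_le_div hr).2 hrR
  have hfin : ((2:ℝ))^(m+1) ≤ 8 * (R/r) ^ (1:ℝ) := by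
    rw [Real.rpow_one]
    rcases Nat.lt_or_ge m 2 with hm2 | hm2
    · have : ((2:ℝ))^(m+1) ≤ 4 := by
        interval_cases m <;> norm_num
      linarith
    · have hmin : r < ss φ (n + (m-1)) := by
        by_contra hcon
        push_neg at hcon
        exact Nat.find_min hm (m := m - 1) (by omega) hcon
      have hdiv : ss φ (n+1) / ss φ (n + (m-1)) = (2:ℝ) ^ ((ff φ (n+(m-1)) - ff φ (n+1) : ℕ) : ℝ) :=
        ss_div φ _ _ (by have := (ff_mono φ).monotone (show n+1 ≤ n+(m-1) by omega); omega)
      have hff : 2*(m-2) ≤ ff φ (n+(m-1)) - ff φ (n+1) := by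
        have := ff_add_ge φ (n+1) (m-2)
        rw [show n+1+(m-2) = n+(m-1) by omega] at this
        omega
      have hRr : (2:ℝ) ^ (m-2 : ℕ) ≤ R / r := by
        have hs1 : ss φ (n+1) ≤ R := hn1.le
        have hs2 : 0 < ss φ (n+(m-1)) := ss_pos φ _
        have h3 : ss φ (n+1) / ss φ (n+(m-1)) ≤ R / r :=
          div_le_div₀ hR.le hs1 hr hmin.le
        rw [hdiv] at h3
        refine le_trans ?_ h3
        rw [← Real.rpow_natCast (2:ℝ) (m-2)]
        apply Real.rpow_le_rpow_of_exponent_le one_le_two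
        exact_mod_cast le_trans (by omega : m - 2 ≤ 2*(m-2)) hff
      calc ((2:ℝ))^(m+1) = 8 * 2^(m-2 : ℕ) := by
            rw [show m+1 = (m-2) + 3 by omega, pow_add]
            ring
        _ ≤ 8 * (R/r) := by linarith
  calc coverNumber r (closedBall z R ∩ Eset φ) ≤ _ := hmain
    _ ≤ _ := cast_le_ofReal hfin

lemma dimSet_nonneg (Φ' : ℝ → ℝ)
    (h : ∀ c₁ > (0:ℝ), ∃ R, 0 < R ∧ R < c₁ ∧ R ^ (1 + Φ' R) ≤ R ∧ 0 < R ^ (1 + Φ' R)) :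
    dimSet Φ' (Eset φ) ⊆ Ici 0 := by
  intro α hα
  by_contra hneg
  rw [mem_Ici, not_le] at hneg
  obtain ⟨c₁, hc₁, c₂, hc₂, hprop⟩ := hα
  obtain ⟨R, hR0, hRc, hT1, hT0⟩ := h c₁ hc₁
  set T := R ^ (1 + Φ' R) with hT
  have hkey : ∀ i : ℕ, (1:ℝ≥0∞) ≤ ENNReal.ofReal (c₂ * (R / (T / 2^i)) ^ α) := by
    intro i
    have h2i : (0:ℝ) < 2^i := by positivity
    have hri : 0 < T / 2^i := by positivity
    have hle : T / 2^i ≤ T := by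
      rw [div_le_iff₀ h2i]
      nlinarith [one_le_pow₀ (one_le_two (α := ℝ)) (n := i)]
    have := hprop (T / 2^i) R hri (hle.trans (le_refl T)) hT1 hRc 0 (zero_mem_Eset φ)
    refine le_trans ?_ this
    apply one_le_coverNumber
    exact ⟨0, mem_closedBall_self hR0.le, zero_mem_Eset φ⟩
  -- derive contradiction: RHS → 0
  have hgeom : ∀ i : ℕ, (1:ℝ) ≤ c₂ * ((R/T) ^ α * ((2:ℝ)^α)^i) := by
    intro i
    have h1 := hkey i
    have h2i : (0:ℝ) < 2^i := by positivity
    have heq : R / (T / 2^i) = (R/T) * 2^i := by field_simp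
    have h3 : (R / (T / 2^i)) ^ α = (R/T) ^ α * ((2:ℝ)^α)^i := by
      rw [heq, Real.mul_rpow (by positivity) (by positivity)]
      congr 1
      rw [← Real.rpow_natCast ((2:ℝ)^α) i, ← Real.rpow_mul (by norm_num : (0:ℝ) ≤ 2),
        mul_comm α (i:ℝ), Real.rpow_mul (by norm_num : (0:ℝ) ≤ 2), Real.rpow_natCast]
    rw [h3] at h1
    exact (ENNReal.one_le_ofReal).1 h1
  have h2α : (2:ℝ)^α < 1 := by
    calc (2:ℝ)^α < 2^(0:ℝ) := by
          apply Real.rpow_lt_rpow_of_exponent_lt one_lt_two hneg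
      _ = 1 := Real.rpow_zero 2
  have h2αpos : (0:ℝ) < (2:ℝ)^α := Real.rpow_pos_of_pos two_pos α
  have hRT : (0:ℝ) < (R/T)^α := Real.rpow_pos_of_pos (by positivity) α
  obtain ⟨i, hi⟩ := exists_pow_lt_of_lt_one
    (show (0:ℝ) < 1 / (c₂ * (R/T)^α) by positivity) h2α
  have := hgeom i
  rw [div_eq_mul_inv, one_mul] at hi
  have hc : c₂ * ((R/T)^α * ((2:ℝ)^α)^i) < 1 := by
    have h4 : ((2:ℝ)^α)^i < (c₂ * (R/T)^α)⁻¹ := hi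
    have h5 : (0:ℝ) < c₂ * (R/T)^α := by positivity
    calc c₂ * ((R/T)^α * ((2:ℝ)^α)^i) = (c₂ * (R/T)^α) * ((2:ℝ)^α)^i := by ring
      _ < (c₂ * (R/T)^α) * (c₂ * (R/T)^α)⁻¹ := by
          apply mul_lt_mul_of_pos_left h4 h5
      _ = 1 := mul_inv_cancel₀ (ne_of_gt h5)
  linarith

lemma ss_div_runs (k : ℕ) (hk : 1 ≤ k) :
    ss φ (nk φ k) / ss φ (nk φ k + k) = (2:ℝ) ^ ((2*k : ℕ) : ℝ) := by
  rw [ss_div φ _ _ (by omega)]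
  congr 2
  have h1 := ff_add φ (nk φ k) k
  rw [rc_run_full φ k hk] at h1
  omega

lemma dimA_ge (α : ℝ) (hα : α ∈ dimSet (fun _ => (0:ℝ)) (Eset φ)) : (1/2 : ℝ) ≤ α := by
  by_contra hneg
  push_neg at hneg
  obtain ⟨c₁, hc₁, c₂, hc₂, hprop⟩ := hα
  have hy : (1:ℝ) < (2:ℝ) ^ (1 - 2*α) := by
    rw [show (1:ℝ) = (2:ℝ)^(0:ℝ) by rw [Real.rpow_zero]]
    apply Real.rpow_lt_rpow_of_exponent_lt one_lt_two
    linarith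
  obtain ⟨k₁, hk₁⟩ := pow_unbounded_of_one_lt c₂ hy
  obtain ⟨k₂, hk₂⟩ := ((ss_tendsto φ).eventually (gt_mem_nhds hc₁)).exists
  set k := max (max k₁ k₂) 1 with hk
  have hk1 : 1 ≤ k := le_max_right _ _
  have hyk : c₂ < ((2:ℝ) ^ (1 - 2*α))^k :=
    lt_of_lt_of_le hk₁ (pow_le_pow_right₀ hy.le (by omega))
  have hRc : ss φ (nk φ k) < c₁ := by
    have h8 := nk_ge_8k φ k hk1
    calc ss φ (nk φ k) ≤ ss φ k₂ := ss_anti φ (by omega)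
      _ < c₁ := hk₂
  set R := ss φ (nk φ k) with hR
  set r := ss φ (nk φ k + k) with hr
  have hrpos := ss_pos φ (nk φ k + k)
  have hRpos := ss_pos φ (nk φ k)
  have hrR : r ≤ R := ss_anti φ (by omega)
  have h1 : r ≤ R ^ (1 + (0:ℝ)) := by rw [add_zero, Real.rpow_one]; exact hrR
  have h2 : R ^ (1 + (0:ℝ)) ≤ R := by rw [add_zero, Real.rpow_one]
  have hprop' := hprop r R hrpos h1 h2 hRc 0 (zero_mem_Eset φ)
  have hlow := cover_lower φ (nk φ k) k
  have hchain : ((2^k : ℕ) : ℝ≥0∞) ≤ ENNReal.ofReal (c₂ * (R/r) ^ α) := le_trans hlow hprop'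
  have hRr : R / r = (2:ℝ) ^ ((2*k : ℕ) : ℝ) := ss_div_runs φ k hk1
  have hcast : ((2^k : ℕ) : ℝ≥0∞) = ENNReal.ofReal ((2:ℝ)^k) := by
    rw [← ENNReal.ofReal_natCast]
    push_cast
    rfl
  have hreal : ((2:ℝ)^k) ≤ c₂ * (R/r) ^ α :=
    (ENNReal.ofReal_le_ofReal_iff (by positivity)).1 (hcast ▸ hchain)
  have hX : (R/r) ^ α = (2:ℝ) ^ (((2*k:ℕ):ℝ) * α) := by
    rw [hRr, ← Real.rpow_mul (by norm_num : (0:ℝ) ≤ 2)]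
  have hXpos : (0:ℝ) < (2:ℝ) ^ (((2*k:ℕ):ℝ) * α) := Real.rpow_pos_of_pos two_pos _
  rw [hX] at hreal
  have hdiv : (2:ℝ)^(k:ℕ) / (2:ℝ) ^ (((2*k:ℕ):ℝ) * α) = (2:ℝ) ^ ((1-2*α) * k) := by
    rw [← Real.rpow_natCast (2:ℝ) k, ← Real.rpow_sub two_pos]
    congr 1
    push_cast
    ring
  have hc2ge : (2:ℝ) ^ ((1-2*α) * k) ≤ c₂ := by
    rw [← hdiv, div_le_iff₀ hXpos]
    linarith
  have hyk2 : ((2:ℝ) ^ (1 - 2*α))^k = (2:ℝ) ^ ((1-2*α) * k) := by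
    rw [← Real.rpow_natCast ((2:ℝ)^(1-2*α)) k, ← Real.rpow_mul (by norm_num : (0:ℝ) ≤ 2)]
  rw [hyk2] at hyk
  linarith

section PhiLemmas
variable {φ} {Φ : ℝ → ℝ}
  (hΦ : ∀ n : ℕ, ∀ R ∈ Ioc (ss φ (n+1)) (ss φ n), R ^ (1 + Φ R) = ss φ (n + φ n))
  (hmono : Monotone φ) (htop : Tendsto φ atTop atTop)
  (hsmall : Tendsto (fun n : ℕ => (φ n : ℝ) / (n : ℝ)) atTop (nhds 0))

include hΦ hmono htop hsmall in
lemma Phi_props {δ : ℝ} (hδ : 0 < δ) :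
    ∃ N : ℕ, 1 ≤ N ∧ ∀ R : ℝ, 0 < R → R < ss φ N → 0 ≤ Φ R ∧ Φ R ≤ δ := by
  obtain ⟨N₁, hN₁⟩ := (htop.eventually (eventually_ge_atTop 1)).exists_forall_of_atTop
  obtain ⟨N₂, hN₂⟩ :=
    (hsmall.eventually (eventually_le_nhds (show (0:ℝ) < 2*δ/3 by positivity))).exists_forall_of_atTop
  refine ⟨max (max N₁ N₂) 1, le_max_right _ _, ?_⟩
  set N := max (max N₁ N₂) 1 with hN
  intro R hR0 hRN
  have hR1 : R < 1 := lt_of_lt_of_le hRN (by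
    calc ss φ N ≤ ss φ 1 := ss_anti φ (le_max_right _ _)
      _ ≤ 1 := (ss_lt_one φ 1 le_rfl).le)
  obtain ⟨n, hn1, hn2⟩ := exists_level φ hR0 hR1.le
  have hnN : N ≤ n := by
    by_contra hcon
    push_neg at hcon
    have : ss φ N ≤ ss φ (n+1) := ss_anti φ (by omega)
    linarith
  have hφ1 : 1 ≤ φ n := hN₁ n (by omega)
  have hkey := hΦ n R ⟨hn1, hn2⟩
  constructor
  · -- 0 ≤ Φ R
    have hup : R ^ (1 + Φ R) ≤ R ^ (1:ℝ) := by
      rw [hkey, Real.rpow_one]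
      calc ss φ (n + φ n) ≤ ss φ (n+1) := ss_anti φ (by omega)
        _ ≤ R := hn1.le
    have := (Real.rpow_le_rpow_left_iff_of_base_lt_one hR0 hR1).1 hup
    linarith
  · -- Φ R ≤ δ
    have hffb : (ff φ (n + φ n) : ℝ) ≤ (1+δ) * ff φ n := by
      have h3 : ff φ (n + φ n) ≤ ff φ n + 3 * φ n := ff_add_le φ n (φ n)
      have h4 : (φ n : ℝ) / n ≤ 2*δ/3 := hN₂ n (by omega)
      have hn0 : (0:ℝ) < n := by
        have : 1 ≤ n := by omega
        exact_mod_cast this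
      have h5 : (3:ℝ) * φ n ≤ 2 * δ * n := by
        rw [div_le_iff₀ hn0] at h4
        linarith
      have h6 : (2:ℝ) * n ≤ ff φ n := by exact_mod_cast two_mul_le_ff φ n
      have h7 : ((ff φ (n + φ n)):ℝ) ≤ (ff φ n : ℝ) + 3 * φ n := by exact_mod_cast h3
      nlinarith [hδ.le]
    have hs : (ss φ n) ^ ((1:ℝ)+δ) ≤ ss φ (n + φ n) := by
      rw [ss_rpow, ss]
      rw [Real.rpow_le_rpow_left_iff one_lt_two]
      have := hffb
      nlinarith
    have hlow : R ^ ((1:ℝ)+δ) ≤ R ^ (1 + Φ R) := by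
      rw [hkey]
      calc R ^ ((1:ℝ)+δ) ≤ (ss φ n) ^ ((1:ℝ)+δ) :=
            Real.rpow_le_rpow hR0.le hn2 (by linarith)
        _ ≤ ss φ (n + φ n) := hs
    have := (Real.rpow_le_rpow_left_iff_of_base_lt_one hR0 hR1).1 hlow
    linarith

lemma incl_A_t (t : ℝ) :
    dimSet (fun _ => (0:ℝ)) (Eset φ) ⊆ dimSet (fun x => t * Φ x) (Eset φ) := by
  rintro α ⟨c₁, hc₁, c₂, hc₂, hp⟩
  refine ⟨c₁, hc₁, c₂, hc₂, ?_⟩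
  intro r R hr h1 h2 hc z hz
  have hrR : r ≤ R := h1.trans h2
  refine hp r R hr ?_ ?_ hc z hz
  · rw [add_zero, Real.rpow_one]; exact hrR
  · rw [add_zero, Real.rpow_one]

include hΦ hmono htop hsmall in
lemma incl_t_theta {t θ : ℝ} (ht : 0 < t) (hθ : θ ∈ Ioo (0:ℝ) 1) :
    dimSet (fun x => t * Φ x) (Eset φ) ⊆ dimSet (fun _ => 1/θ - 1) (Eset φ) := by
  rintro α ⟨c₁, hc₁, c₂, hc₂, hp⟩
  have hδ : (0:ℝ) < (1/θ - 1)/t := by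
    have h1 : 1 < 1/θ := (one_lt_div hθ.1).2 hθ.2
    apply div_pos (by linarith) ht
  obtain ⟨N, hN1, hNp⟩ := Phi_props hΦ hmono htop hsmall hδ
  refine ⟨min c₁ (ss φ N), lt_min hc₁ (ss_pos φ N), c₂, hc₂, ?_⟩
  intro r R hr h1 h2 hc z hz
  have hR0 : 0 < R := lt_of_lt_of_le hr (h1.trans h2)
  have hRN : R < ss φ N := lt_of_lt_of_le hc (min_le_right _ _)
  have hR1 : R < 1 := lt_of_lt_of_le hRN ((ss_lt_one φ N hN1).le)
  obtain ⟨hΦ0, hΦδ⟩ := hNp R hR0 hRN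
  have hexp : 1 + t * Φ R ≤ 1 + (1/θ - 1) := by
    have : t * Φ R ≤ t * ((1/θ-1)/t) := mul_le_mul_of_nonneg_left hΦδ ht.le
    rw [mul_div_cancel₀ _ (ne_of_gt ht)] at this
    linarith
  have hexp0 : (1:ℝ) ≤ 1 + t * Φ R := by nlinarith
  refine hp r R hr ?_ ?_ (lt_of_lt_of_le hc (min_le_left _ _)) z hz
  · calc r ≤ R ^ (1 + (1/θ - 1)) := h1
      _ ≤ R ^ (1 + t * Φ R) :=
        Real.rpow_le_rpow_of_exponent_ge hR0 hR1.le hexp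
  · calc R ^ (1 + t * Φ R) ≤ R ^ (1:ℝ) :=
        Real.rpow_le_rpow_of_exponent_ge hR0 hR1.le hexp0
      _ = R := Real.rpow_one R

include hΦ hmono htop hsmall in
lemma incl_t_mono {t₁ t₂ : ℝ} (h0 : 0 < t₁) (h12 : t₁ ≤ t₂) :
    dimSet (fun x => t₁ * Φ x) (Eset φ) ⊆ dimSet (fun x => t₂ * Φ x) (Eset φ) := by
  rintro α ⟨c₁, hc₁, c₂, hc₂, hp⟩
  obtain ⟨N, hN1, hNp⟩ := Phi_props hΦ hmono htop hsmall one_pos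
  refine ⟨min c₁ (ss φ N), lt_min hc₁ (ss_pos φ N), c₂, hc₂, ?_⟩
  intro r R hr h1 h2 hc z hz
  have hR0 : 0 < R := lt_of_lt_of_le hr (h1.trans h2)
  have hRN : R < ss φ N := lt_of_lt_of_le hc (min_le_right _ _)
  have hR1 : R < 1 := lt_of_lt_of_le hRN ((ss_lt_one φ N hN1).le)
  obtain ⟨hΦ0, _⟩ := hNp R hR0 hRN
  have hexp : 1 + t₁ * Φ R ≤ 1 + t₂ * Φ R := by nlinarith
  have hexp0 : (1:ℝ) ≤ 1 + t₁ * Φ R := by nlinarith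
  refine hp r R hr ?_ ?_ (lt_of_lt_of_le hc (min_le_left _ _)) z hz
  · calc r ≤ R ^ (1 + t₂ * Φ R) := h1
      _ ≤ R ^ (1 + t₁ * Φ R) := Real.rpow_le_rpow_of_exponent_ge hR0 hR1.le hexp
  · calc R ^ (1 + t₁ * Φ R) ≤ R ^ (1:ℝ) :=
        Real.rpow_le_rpow_of_exponent_ge hR0 hR1.le hexp0
      _ = R := Real.rpow_one R

lemma rc_sub (n m : ℕ) : rc φ (n+1) (m-2) ≤ rc φ n m := by
  rw [rc, rc]
  apply Finset.card_le_card_of_injOn (fun i => i + 1)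
  · intro i hi
    simp only [Finset.coe_filter, Finset.mem_coe, Finset.mem_filter, Finset.mem_range, Set.mem_setOf_eq] at hi ⊢
    refine ⟨by omega, ?_⟩
    rw [show n + (i+1) = n + 1 + i by ring]
    exact hi.2
  · intro a _ b _ h
    simp only at h
    omega

include hΦ hmono htop hsmall in
lemma main_mem {t : ℝ} (ht : 0 < t) (ht1 : t < 1) :
    (2/5 : ℝ) ∈ dimSet (fun x => t * Φ x) (Eset φ) := by
  obtain ⟨C, hC⟩ := window φ hmono htop ht
  set K := C + 4 with hK
  refine ⟨ss φ 1, ss_pos φ 1, (2:ℝ)^K, by positivity, ?_⟩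
  intro r R hr h1 h2 hc z hz
  have hrR : r ≤ R := h1.trans h2
  have hR0 : 0 < R := lt_of_lt_of_le hr hrR
  have hR1 : R < 1 := lt_of_lt_of_le hc (ss_lt_one φ 1 le_rfl).le |>.trans_le le_rfl
  obtain ⟨n, hn1, hn2⟩ := exists_level φ hR0 hR1.le
  have hkey := hΦ n R ⟨hn1, hn2⟩
  -- threshold bound
  have hsplit : R ^ (1 + t * Φ R) = R ^ (1-t) * (R ^ (1 + Φ R)) ^ t := by
    rw [← Real.rpow_mul hR0.le, ← Real.rpow_add hR0]
    congr 1
    ring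
  have hT2 : R ^ (1 + t * Φ R) ≤ (ss φ n) ^ ((1:ℝ)-t) * (ss φ (n + φ n)) ^ (t:ℝ) := by
    rw [hsplit, hkey]
    apply mul_le_mul_of_nonneg_right
    · exact Real.rpow_le_rpow hR0.le hn2 (by linarith)
    · exact Real.rpow_nonneg (ss_pos φ _).le t
  classical
  have hm := exists_m φ n hr
  set m := Nat.find hm with hmdef
  have hsr : ss φ (n+m) ≤ r := Nat.find_spec hm
  -- depth inequality
  have hdepth : ((1:ℝ)-t) * ff φ n + t * ff φ (n + φ n) ≤ ff φ (n+m) := by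
    have hchain : ss φ (n+m) ≤ (ss φ n) ^ ((1:ℝ)-t) * (ss φ (n + φ n)) ^ (t:ℝ) :=
      le_trans hsr (le_trans h1 hT2)
    rw [ss_rpow, ss_rpow, ← Real.rpow_add two_pos, ss] at hchain
    have := (Real.rpow_le_rpow_left_iff one_lt_two).1 hchain
    nlinarith [this]
  have hwinhyp : 2*t*(φ n : ℝ) ≤ 3*(m:ℝ) := by
    have h3 : (ff φ (n+m) : ℝ) ≤ ff φ n + 3*m := by exact_mod_cast ff_add_le φ n m
    have h4 : (ff φ n : ℝ) + 2*(φ n) ≤ ff φ (n + φ n) := by exact_mod_cast ff_add_ge φ n (φ n)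
    nlinarith
  have hwin : 2 * rc φ n m ≤ m + C := hC n m hwinhyp
  have hmain := cover_main φ hz n m hr hn2 hsr
  have hRr1 : (1:ℝ) ≤ R / r := (one_le_div hr).2 hrR
  have hRr25 : (1:ℝ) ≤ (R/r) ^ ((2:ℝ)/5) := by
    rw [show (1:ℝ) = (1:ℝ) ^ ((2:ℝ)/5) by rw [Real.one_rpow]]
    exact Real.rpow_le_rpow one_pos.le hRr1 (by norm_num)
  have hfin : ((2:ℝ))^(m+1) ≤ (2:ℝ)^K * (R/r) ^ ((2:ℝ)/5) := by
    rcases Nat.lt_or_ge m 2 with hm2 | hm2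
    · have h4 : ((2:ℝ))^(m+1) ≤ 4 := by interval_cases m <;> norm_num
      have hK16 : (16:ℝ) ≤ (2:ℝ)^K := by
        calc (16:ℝ) = 2^4 := by norm_num
          _ ≤ 2^K := pow_le_pow_right₀ one_le_two (by omega)
      nlinarith
    · set B := ff φ (n+m-1) - ff φ (n+1) with hB
      have hmin : r < ss φ (n + (m-1)) := by
        by_contra hcon
        push_neg at hcon
        exact Nat.find_min hm (m := m - 1) (by omega) hcon
      have hffm : ff φ (n+1) ≤ ff φ (n+m-1) := (ff_mono φ).monotone (by omega)
      have hadd : ff φ (n+m-1) + rc φ (n+1) (m-2) = ff φ (n+1) + 3*(m-2) := by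
        have := ff_add φ (n+1) (m-2)
        rwa [show n+1+(m-2) = n+m-1 by omega] at this
      have hrcs := rc_sub (φ := φ) n m
      have hnat : 5*(m+1) ≤ 5*K + 2*B := by omega
      have hRrB : (2:ℝ) ^ ((B:ℕ):ℝ) ≤ R / r := by
        have hdiv : ss φ (n+1) / ss φ (n+(m-1)) = (2:ℝ) ^ ((ff φ (n+(m-1)) - ff φ (n+1) : ℕ) : ℝ) :=
          ss_div φ _ _ (by omega)
        have h3 : ss φ (n+1) / ss φ (n+(m-1)) ≤ R / r :=
          div_le_div₀ hR0.le hn1.le hr hmin.le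
        rw [hdiv] at h3
        rwa [show n+(m-1) = n+m-1 by omega] at h3
      calc ((2:ℝ))^(m+1) = (2:ℝ) ^ ((m+1 : ℕ) : ℝ) := by
            rw [Real.rpow_natCast]
        _ ≤ (2:ℝ) ^ ((K:ℝ) + ((B:ℕ):ℝ) * (2/5)) := by
            apply Real.rpow_le_rpow_of_exponent_le one_le_two
            have : ((5*(m+1) : ℕ) : ℝ) ≤ ((5*K + 2*B : ℕ) : ℝ) := by exact_mod_cast hnat
            push_cast at this ⊢
            linarith
        _ = (2:ℝ)^K * ((2:ℝ) ^ ((B:ℕ):ℝ)) ^ ((2:ℝ)/5) := by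
            rw [Real.rpow_add two_pos, Real.rpow_natCast, ← Real.rpow_mul (by norm_num : (0:ℝ) ≤ 2)]
        _ ≤ (2:ℝ)^K * (R/r) ^ ((2:ℝ)/5) := by
            apply mul_le_mul_of_nonneg_left _ (by positivity)
            exact Real.rpow_le_rpow (by positivity) hRrB (by norm_num)
  calc coverNumber r (closedBall z R ∩ Eset φ) ≤ _ := hmain
    _ ≤ _ := cast_le_ofReal hfin

end PhiLemmas

section Assembly
variable {φ} {Φ : ℝ → ℝ}
  (hΦ : ∀ n : ℕ, ∀ R ∈ Ioc (ss φ (n+1)) (ss φ n), R ^ (1 + Φ R) = ss φ (n + φ n))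
  (hmono : Monotone φ) (htop : Tendsto φ atTop atTop)
  (hsmall : Tendsto (fun n : ℕ => (φ n : ℝ) / (n : ℝ)) atTop (nhds 0))

include hΦ hmono htop hsmall in
lemma nonneg_t {t : ℝ} (ht : 0 < t) : dimSet (fun x => t * Φ x) (Eset φ) ⊆ Ici 0 := by
  apply dimSet_nonneg
  intro c₁ hc₁
  obtain ⟨N, hN1, hNp⟩ := Phi_props hΦ hmono htop hsmall one_pos
  refine ⟨min (c₁/2) (ss φ N / 2), ?_, ?_, ?_, ?_⟩
  · exact lt_min (by linarith) (by linarith [ss_pos φ N])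
  · exact lt_of_le_of_lt (min_le_left _ _) (by linarith)
  · set R := min (c₁/2) (ss φ N / 2) with hR
    have hR0 : 0 < R := lt_min (by linarith) (by linarith [ss_pos φ N])
    have hRN : R < ss φ N := lt_of_le_of_lt (min_le_right _ _) (by linarith [ss_pos φ N])
    have hR1 : R < 1 := lt_of_lt_of_le hRN (ss_lt_one φ N hN1).le
    obtain ⟨hΦ0, _⟩ := hNp R hR0 hRN
    calc R ^ (1 + t * Φ R) ≤ R ^ (1:ℝ) :=
          Real.rpow_le_rpow_of_exponent_ge hR0 hR1.le (by nlinarith)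
      _ = R := Real.rpow_one R
  · apply Real.rpow_pos_of_pos
    exact lt_min (by linarith) (by linarith [ss_pos φ N])

lemma nonneg_theta {θ : ℝ} (hθ : θ ∈ Ioo (0:ℝ) 1) :
    dimSet (fun _ => 1/θ - 1) (Eset φ) ⊆ Ici 0 := by
  apply dimSet_nonneg
  intro c₁ hc₁
  have hθ1 : 1 ≤ 1/θ := le_of_lt ((one_lt_div hθ.1).2 hθ.2)
  refine ⟨min (c₁/2) (1/2), lt_min (by linarith) (by norm_num),
    lt_of_le_of_lt (min_le_left _ _) (by linarith), ?_, ?_⟩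
  · set R := min (c₁/2) (1/2 : ℝ) with hR
    have hR0 : 0 < R := lt_min (by linarith) (by norm_num)
    have hR1 : R ≤ 1 := le_trans (min_le_right _ _) (by norm_num)
    calc R ^ (1 + (1/θ - 1)) ≤ R ^ (1:ℝ) :=
          Real.rpow_le_rpow_of_exponent_ge hR0 hR1 (by linarith)
      _ = R := Real.rpow_one R
  · exact Real.rpow_pos_of_pos (lt_min (by linarith) (by norm_num)) _

lemma nonneg_zero : dimSet (fun _ => (0:ℝ)) (Eset φ) ⊆ Ici 0 := by
  apply dimSet_nonneg
  intro c₁ hc₁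
  refine ⟨min (c₁/2) (1/2), lt_min (by linarith) (by norm_num),
    lt_of_le_of_lt (min_le_left _ _) (by linarith), ?_, ?_⟩
  · rw [add_zero, Real.rpow_one]
  · rw [add_zero, Real.rpow_one]
    exact lt_min (by linarith) (by norm_num)

end Assembly

end CCD

/-- Failure of continuity in the parameter `t` for `Φ_t = t·Φ` at `t = 0`: for any
increasing depth function `φ` with `φ(n) → ∞` and `φ(n)/n → 0` there is a central Cantor
set `E` such that, for the dimension function `Φ` associated with `φ` and `E` (that is,
`R^(1+Φ R) = s (n + φ n)` for `R ∈ (s (n+1), s n]`), the upper `tΦ`-dimensions of `E` lie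
between the quasi-Assouad and Assouad dimensions of `E`, yet their limit as `t → 0⁺` is
strictly smaller than the Assouad dimension of `E`. -/
theorem exists_centralCantor_discontinuity_at_zero (φ : ℕ → ℕ) (hmono : Monotone φ)
    (htop : Tendsto φ atTop atTop)
    (hsmall : Tendsto (fun n : ℕ => (φ n : ℝ) / (n : ℝ)) atTop (nhds 0)) :
    ∃ (s : ℕ → ℝ) (E : Set ℝ), IsCentralCantorSet s E ∧
      ∀ Φ : ℝ → ℝ, (∀ n : ℕ, ∀ R ∈ Ioc (s (n + 1)) (s n), R ^ (1 + Φ R) = s (n + φ n)) →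
        (∀ t : ℝ, 0 < t →
          upperPhiDim (fun x => t * Φ x) E ∈ Icc (quasiAssouadDim E) (assouadDim E)) ∧
        ∃ ℓ : ℝ, Tendsto (fun t : ℝ => upperPhiDim (fun x => t * Φ x) E)
            (nhdsWithin 0 (Ioi 0)) (nhds ℓ) ∧ ℓ < assouadDim E := by
  classical
  refine ⟨CCD.ss φ, CCD.Eset φ, CCD.isCentralCantorSet φ, ?_⟩
  intro Φ hΦ
  haveI : Nonempty (Ioo (0:ℝ) 1) := ⟨⟨1/2, by norm_num⟩⟩
  set F : ℝ → ℝ := fun t => upperPhiDim (fun x => t * Φ x) (CCD.Eset φ) with hF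
  have hΦ' : ∀ n : ℕ, ∀ R ∈ Ioc (CCD.ss φ (n+1)) (CCD.ss φ n),
      R ^ (1 + Φ R) = CCD.ss φ (n + φ n) := hΦ
  -- basic facts
  have hone : ∀ Φ' : ℝ → ℝ, (1:ℝ) ∈ CCD.dimSet Φ' (CCD.Eset φ) := CCD.one_mem_dimSet φ
  have hFle : ∀ t : ℝ, 0 < t → F t ≤ assouadDim (CCD.Eset φ) := by
    intro t ht
    rw [hF]
    simp only
    rw [assouadDim, CCD.upperPhiDim_eq, CCD.upperPhiDim_eq]
    exact csInf_le_csInf ((bddBelow_Ici).mono (CCD.nonneg_t hΦ' hmono htop hsmall ht))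
      ⟨1, hone _⟩ (CCD.incl_A_t t)
  have hFge : ∀ t : ℝ, 0 < t → quasiAssouadDim (CCD.Eset φ) ≤ F t := by
    intro t ht
    rw [quasiAssouadDim]
    apply ciSup_le
    intro θ
    rw [hF]
    simp only
    rw [upperAssouadSpectrum, CCD.upperPhiDim_eq, CCD.upperPhiDim_eq]
    exact csInf_le_csInf ((bddBelow_Ici).mono (CCD.nonneg_theta θ.2))
      ⟨1, hone _⟩ (CCD.incl_t_theta hΦ' hmono htop hsmall ht θ.2)
  have hAhalf : (1/2 : ℝ) ≤ assouadDim (CCD.Eset φ) := by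
    rw [assouadDim, CCD.upperPhiDim_eq]
    exact le_csInf ⟨1, hone _⟩ (fun α hα => CCD.dimA_ge φ α hα)
  have hup : ∀ t ∈ Ioo (0:ℝ) 1, F t ≤ 2/5 := by
    intro t ht
    rw [hF]
    simp only
    rw [CCD.upperPhiDim_eq]
    exact csInf_le ((bddBelow_Ici).mono (CCD.nonneg_t hΦ' hmono htop hsmall ht.1))
      (CCD.main_mem hΦ' hmono htop hsmall ht.1 ht.2)
  have hanti : ∀ t₁ ∈ Ioo (0:ℝ) 1, ∀ t₂ ∈ Ioo (0:ℝ) 1, t₁ ≤ t₂ → F t₂ ≤ F t₁ := by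
    intro t₁ ht₁ t₂ ht₂ h12
    rw [hF]
    simp only
    rw [CCD.upperPhiDim_eq, CCD.upperPhiDim_eq]
    exact csInf_le_csInf ((bddBelow_Ici).mono (CCD.nonneg_t hΦ' hmono htop hsmall ht₂.1))
      ⟨1, hone _⟩ (CCD.incl_t_mono hΦ' hmono htop hsmall ht₁.1 h12)
  refine ⟨fun t ht => mem_Icc.2 ⟨hFge t ht, hFle t ht⟩, ?_⟩
  set ℓ : ℝ := sSup (F '' Ioo 0 1) with hℓ
  have himg : (F '' Ioo 0 1).Nonempty := ⟨F (1/2), mem_image_of_mem F (by norm_num)⟩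
  have hbdd : BddAbove (F '' Ioo 0 1) := by
    refine ⟨2/5, ?_⟩
    rintro x ⟨t, ht, rfl⟩
    exact hup t ht
  have hℓle : ℓ ≤ 2/5 := csSup_le himg (by rintro x ⟨t, ht, rfl⟩; exact hup t ht)
  refine ⟨ℓ, ?_, by linarith⟩
  apply tendsto_order.2
  constructor
  · intro a ha
    obtain ⟨x, hx, hax⟩ := exists_lt_of_lt_csSup himg ha
    obtain ⟨t₀, ht₀, rfl⟩ := hx
    filter_upwards [Ioo_mem_nhdsGT ht₀.1]
      with t ht
    have htIoo : t ∈ Ioo (0:ℝ) 1 := ⟨ht.1, lt_trans ht.2 ht₀.2⟩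
    exact lt_of_lt_of_le hax (hanti t htIoo t₀ ht₀ ht.2.le)
  · intro b hb
    filter_upwards [Ioo_mem_nhdsGT (one_pos : (0:ℝ) < 1)]
      with t ht
    exact lt_of_le_of_lt (le_csSup hbdd (mem_image_of_mem F ht)) hb

end
end
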